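/- arXiv:2110.03449 — 3 statements merged into one kernel-verified Lean document; each statement's English description precedes it below -/
import Mathlib

section
/- Let D be a bounded domain in ℝ^m, m ≥ 2, and let u : closure(D) → ℝ be continuous on the closure of D and twice continuously differentiable in D. Suppose there is r* > 0 with D_{r*} ≠ ∅ such that for every r ∈ (0, r*) the spherical mean M(·, r, u) is harmonic in D_r. Then u is harmonic in D. -/
open MeasureTheory Metric

/-- The spherical mean `M(x, r, u) = (1/ω_m) ∫_{S_1(0)} u(x + r y) dS_y`,
realized as the average of `y ↦ u (x + r • y)` over the unit sphere with respect to
the `(m-1)`-dimensional Hausdorff (surface-area) measure. -/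
noncomputable def sphereMean (m : ℕ) (u : EuclideanSpace ℝ (Fin m) → ℝ)
    (x : EuclideanSpace ℝ (Fin m)) (r : ℝ) : ℝ :=
  ⨍ y in sphere (0 : EuclideanSpace ℝ (Fin m)) 1, u (x + r • y) ∂μH[(m : ℝ) - 1]

/-- The iterated spherical mean
`I(x, r', r, u) = (1/ω_m²) ∫_{S_1(0)} ∫_{S_1(0)} u(x + r' y + r z) dS_z dS_y`. -/
noncomputable def iterSphereMean (m : ℕ) (u : EuclideanSpace ℝ (Fin m) → ℝ)
    (x : EuclideanSpace ℝ (Fin m)) (r' r : ℝ) : ℝ :=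
  ⨍ y in sphere (0 : EuclideanSpace ℝ (Fin m)) 1,
    ⨍ z in sphere (0 : EuclideanSpace ℝ (Fin m)) 1,
      u (x + r' • y + r • z) ∂μH[(m : ℝ) - 1] ∂μH[(m : ℝ) - 1]

/-- The Laplacian `∇²u (x) = ∑ i ∂²u/∂x_i² (x)`. -/
noncomputable def laplacian (m : ℕ) (u : EuclideanSpace ℝ (Fin m) → ℝ)
    (x : EuclideanSpace ℝ (Fin m)) : ℝ :=
  ∑ i : Fin m, fderiv ℝ (fun y => fderiv ℝ u y (EuclideanSpace.single i 1)) x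
    (EuclideanSpace.single i 1)


set_option maxHeartbeats 1000000

open scoped ENNReal NNReal

section AuxLemmas

noncomputable def insE {n : ℕ} (i : Fin (n+1)) (c : ℝ) (y : EuclideanSpace ℝ (Fin n)) :
    EuclideanSpace ℝ (Fin (n+1)) :=
  (EuclideanSpace.equiv (Fin (n+1)) ℝ).symm (Fin.insertNth i c (fun k => y k))

lemma insE_apply_same {n : ℕ} (i : Fin (n+1)) (c : ℝ) (y : EuclideanSpace ℝ (Fin n)) :
    insE i c y i = c := by
  simp [insE, EuclideanSpace.equiv]

lemma insE_apply_succAbove {n : ℕ} (i : Fin (n+1)) (c : ℝ) (y : EuclideanSpace ℝ (Fin n)) (k : Fin n) :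
    insE i c y (i.succAbove k) = y k := by
  simp [insE, EuclideanSpace.equiv]

lemma insE_isometry {n : ℕ} (i : Fin (n+1)) (c : ℝ) : Isometry (insE (n := n) i c) := by
  intro y z
  simp only [edist_dist]
  congr 1
  rw [EuclideanSpace.dist_eq, EuclideanSpace.dist_eq]
  congr 1
  rw [Fin.sum_univ_succAbove _ i]
  simp [insE_apply_same, insE_apply_succAbove]

noncomputable def projE {n : ℕ} (x : EuclideanSpace ℝ (Fin (n+1))) : EuclideanSpace ℝ (Fin n) :=
  (EuclideanSpace.equiv (Fin n) ℝ).symm (fun j => x (Fin.castSucc j))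

lemma projE_lipschitz {n : ℕ} : LipschitzWith 1 (projE (n := n)) := by
  apply LipschitzWith.of_dist_le_mul
  intro x y
  rw [NNReal.coe_one, one_mul, EuclideanSpace.dist_eq, EuclideanSpace.dist_eq]
  apply Real.sqrt_le_sqrt
  have h : ∀ j : Fin n, projE x j = x (Fin.castSucc j) := fun j => rfl
  have h' : ∀ j : Fin n, projE y j = y (Fin.castSucc j) := fun j => rfl
  simp only [h, h']
  rw [Fin.sum_univ_castSucc (f := fun i => dist (x i) (y i) ^ 2)]
  have : (0:ℝ) ≤ dist (x (Fin.last n)) (y (Fin.last n)) ^ 2 := by positivity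
  linarith [this]

lemma coord_le_norm {m : ℕ} (x : EuclideanSpace ℝ (Fin m)) (i : Fin m) : |x i| ≤ ‖x‖ := by
  rw [EuclideanSpace.norm_eq, ← Real.sqrt_sq_eq_abs]
  apply Real.sqrt_le_sqrt
  calc x i ^ 2 = ‖x i‖ ^ 2 := by rw [Real.norm_eq_abs, sq_abs]
    _ ≤ ∑ j, ‖x j‖ ^ 2 := by
        apply Finset.single_le_sum (f := fun j => ‖x j‖ ^ 2) (fun j _ => by positivity)
          (Finset.mem_univ i)

lemma nu_lipschitz {E : Type*} [NormedAddCommGroup E] [NormedSpace ℝ E] :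
    LipschitzOnWith 2 (fun x : E => ‖x‖⁻¹ • x) {x : E | 1 ≤ ‖x‖} := by
  apply LipschitzOnWith.of_dist_le_mul
  intro x hx y hy
  simp only [Set.mem_setOf_eq] at hx hy
  have hax : (0:ℝ) < ‖x‖ := lt_of_lt_of_le one_pos hx
  have hay : (0:ℝ) < ‖y‖ := lt_of_lt_of_le one_pos hy
  rw [dist_eq_norm, dist_eq_norm]
  have key : ‖x‖⁻¹ • x - ‖y‖⁻¹ • y = (‖x‖ * ‖y‖)⁻¹ • (‖y‖ • x - ‖x‖ • y) := by
    rw [smul_sub, mul_inv]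
    rw [smul_smul, smul_smul]
    congr 1
    · congr 1; field_simp
    · congr 1; field_simp
  rw [key, norm_smul, norm_inv, norm_mul, norm_norm, norm_norm]
  have hsplit : ‖y‖ • x - ‖x‖ • y = ‖y‖ • (x - y) + (‖y‖ - ‖x‖) • y := by
    rw [smul_sub, sub_smul]; abel
  have hb : ‖‖y‖ • x - ‖x‖ • y‖ ≤ 2 * ‖y‖ * ‖x - y‖ := by
    rw [hsplit]
    refine (norm_add_le _ _).trans ?_
    rw [norm_smul, norm_smul, norm_norm]
    have h1 : ‖(‖y‖ - ‖x‖ : ℝ)‖ ≤ ‖x - y‖ := by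
      rw [Real.norm_eq_abs, abs_sub_comm]
      exact abs_norm_sub_norm_le x y
    nlinarith [norm_nonneg (x - y), norm_nonneg y, mul_le_mul_of_nonneg_right h1 (le_of_lt hay)]
  calc (‖x‖ * ‖y‖)⁻¹ * ‖‖y‖ • x - ‖x‖ • y‖
      ≤ (‖x‖ * ‖y‖)⁻¹ * (2 * ‖y‖ * ‖x - y‖) := by
        apply mul_le_mul_of_nonneg_left hb
        positivity
    _ = (2 / ‖x‖) * ‖x - y‖ := by field_simp
    _ ≤ 2 * ‖x - y‖ := by
        apply mul_le_mul_of_nonneg_right _ (norm_nonneg _)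
        rw [div_le_iff₀ hax]
        nlinarith

lemma aux_finite (k : ℕ) {s : Set (EuclideanSpace ℝ (Fin k))} (hs : Bornology.IsBounded s) :
    μH[(k:ℝ)] s < ⊤ := by
  set e := EuclideanSpace.equiv (Fin k) ℝ
  have hlip := e.symm.toContinuousLinearMap.lipschitz
  have himg : s = e.symm.toContinuousLinearMap '' (e '' s) := by
    ext x; simp
  rw [himg]
  have h1 := hlip.hausdorffMeasure_image_le (show (0:ℝ) ≤ (k:ℝ) by positivity) (e '' s)
  refine h1.trans_lt ?_
  apply ENNReal.mul_lt_top
  · exact ENNReal.rpow_lt_top_of_nonneg (by positivity) ENNReal.coe_ne_top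
  · have h2 : μH[(k:ℝ)] (e '' s) = volume (e '' s) := by
      have h3 := hausdorffMeasure_pi_real (ι := Fin k)
      simp only [Fintype.card_fin] at h3
      rw [h3]
    rw [h2]
    have hb : Bornology.IsBounded (⇑e '' s) :=
      (e.toContinuousLinearMap.lipschitz.isBounded_image hs)
    obtain ⟨R, hR⟩ := hb.subset_closedBall 0
    exact (measure_mono hR).trans_lt (isCompact_closedBall 0 R).measure_lt_top

lemma aux_pos (k : ℕ) {s : Set (EuclideanSpace ℝ (Fin k))} (hs : IsOpen s) (hne : s.Nonempty) :
    0 < μH[(k:ℝ)] s := by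
  set e := EuclideanSpace.equiv (Fin k) ℝ
  have hlip := e.toContinuousLinearMap.lipschitz
  have h1 := hlip.hausdorffMeasure_image_le (show (0:ℝ) ≤ (k:ℝ) by positivity) s
  have h2 : μH[(k:ℝ)] (e '' s) = volume (⇑e '' s) := by
    have h3 := hausdorffMeasure_pi_real (ι := Fin k)
    simp only [Fintype.card_fin] at h3
    rw [h3]
  have hopen : IsOpen (⇑e '' s) := e.toHomeomorph.isOpenMap _ hs
  have hpos : 0 < volume (⇑e '' s) := hopen.measure_pos volume (hne.image _)
  simp only [ContinuousLinearEquiv.coe_coe] at h1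
  rw [h2] at h1
  by_contra h
  push_neg at h
  have h0 : μH[(k:ℝ)] s = 0 := le_antisymm h (zero_le)
  rw [h0, mul_zero] at h1
  exact absurd (le_antisymm h1 (zero_le)) hpos.ne'

lemma sphere_subset_cover (n : ℕ) :
    sphere (0 : EuclideanSpace ℝ (Fin (n+1))) 1 ⊆
      ⋃ p : Fin (n+1) × Bool,
        (fun x : EuclideanSpace ℝ (Fin (n+1)) => ‖x‖⁻¹ • x) ''
          (insE p.1 (if p.2 then 1 else -1) '' closedBall 0 (n+1)) := by
  intro x hx
  have hxn : ‖x‖ = 1 := by simpa [mem_sphere_zero_iff_norm] using hx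
  obtain ⟨i, -, hi⟩ := Finset.exists_max_image Finset.univ (fun j => |x j|) ⟨0, Finset.mem_univ 0⟩
  have ht : 0 < |x i| := by
    by_contra h
    push_neg at h
    have : x = 0 := by
      ext j
      have hz := abs_eq_zero.mp (le_antisymm ((hi j (Finset.mem_univ j)).trans h) (abs_nonneg _))
      simpa using hz
    rw [this] at hxn; simp at hxn
  set t := |x i| with htdef
  set b : Bool := decide (0 ≤ x i) with hbdef
  set c : ℝ := if b then 1 else -1 with hcdef
  have hxi : x i = c * t := by
    by_cases h : 0 ≤ x i
    · simp [hcdef, hbdef, h, htdef, abs_of_nonneg h]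
    · push_neg at h
      simp [hcdef, hbdef, not_le.mpr h, htdef, abs_of_neg h]
  set w : EuclideanSpace ℝ (Fin (n+1)) := t⁻¹ • x with hwdef
  set y : EuclideanSpace ℝ (Fin n) :=
    (EuclideanSpace.equiv (Fin n) ℝ).symm (fun k => w (i.succAbove k)) with hydef
  have hyk : ∀ k, y k = w (i.succAbove k) := fun k => rfl
  have hwi : w i = c := by
    simp only [hwdef, PiLp.smul_apply, smul_eq_mul, hxi]
    field_simp
  have hins : insE i c y = w := by
    apply (EuclideanSpace.equiv (Fin (n+1)) ℝ).injective
    rw [insE, ContinuousLinearEquiv.apply_symm_apply]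
    have h2 : (fun k => y k) = Fin.removeNth i (fun j => w j) := by
      funext k; exact hyk k
    rw [h2, ← hwi]
    exact Fin.insertNth_self_removeNth i (fun j => w j)
  have hyb : y ∈ closedBall (0 : EuclideanSpace ℝ (Fin n)) (n+1) := by
    rw [mem_closedBall_zero_iff, EuclideanSpace.norm_eq]
    have hbd : ∀ k : Fin n, ‖y k‖ ^ 2 ≤ 1 := by
      intro k
      have hle : |w (i.succAbove k)| ≤ 1 := by
        simp only [hwdef, PiLp.smul_apply, smul_eq_mul, abs_mul, abs_inv]
        rw [abs_of_pos ht, inv_mul_le_iff₀ ht, mul_one]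
        exact hi _ (Finset.mem_univ _)
      have h2 : ‖y k‖ = |w (i.succAbove k)| := by rw [hyk k, Real.norm_eq_abs]
      rw [h2]
      nlinarith [abs_nonneg (w (i.succAbove k))]
    have hsum : ∑ k : Fin n, ‖y k‖ ^ 2 ≤ n := by
      calc ∑ k : Fin n, ‖y k‖ ^ 2 ≤ ∑ _k : Fin n, (1:ℝ) := Finset.sum_le_sum (fun k _ => hbd k)
        _ = n := by simp
    have h1 : Real.sqrt (∑ k : Fin n, ‖y k‖ ^ 2) ≤ Real.sqrt n := Real.sqrt_le_sqrt hsum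
    refine h1.trans ?_
    rw [show ((n:ℝ)+1) = Real.sqrt ((n+1)^2) by rw [Real.sqrt_sq (by positivity)]]
    apply Real.sqrt_le_sqrt
    nlinarith [Nat.cast_nonneg (α := ℝ) n]
  rw [Set.mem_iUnion]
  refine ⟨(i, b), ⟨insE i c y, ⟨y, hyb, rfl⟩, ?_⟩⟩
  rw [hins]
  show ‖w‖⁻¹ • w = x
  have hwn : ‖w‖ = t⁻¹ := by
    rw [hwdef, norm_smul, hxn, norm_inv, Real.norm_eq_abs, abs_abs, mul_one]
  rw [hwn, inv_inv, hwdef, smul_smul, mul_inv_cancel₀ ht.ne', one_smul]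

lemma sphere_hausdorff_lt_top (n : ℕ) :
    μH[(n:ℝ)] (sphere (0 : EuclideanSpace ℝ (Fin (n+1))) 1) < ⊤ := by
  refine (measure_mono (sphere_subset_cover n)).trans_lt ?_
  refine (measure_iUnion_le _).trans_lt ?_
  rw [tsum_fintype]
  refine ENNReal.sum_lt_top.mpr (fun p _ => ?_)
  set c : ℝ := if p.2 then 1 else -1 with hcdef
  have hcabs : |c| = 1 := by rw [hcdef]; rcases p.2 with _|_ <;> norm_num
  have hsub : insE p.1 c '' closedBall 0 (n+1) ⊆ {x : EuclideanSpace ℝ (Fin (n+1)) | 1 ≤ ‖x‖} := by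
    rintro _ ⟨y, -, rfl⟩
    have := coord_le_norm (insE p.1 c y) p.1
    rw [insE_apply_same, hcabs] at this
    exact this
  have h1 := (nu_lipschitz.mono hsub).hausdorffMeasure_image_le
    (show (0:ℝ) ≤ (n:ℝ) by positivity)
  refine h1.trans_lt ?_
  apply ENNReal.mul_lt_top
  · exact ENNReal.rpow_lt_top_of_nonneg (by positivity) ENNReal.coe_ne_top
  · rw [(insE_isometry p.1 c).hausdorffMeasure_image (Or.inl (by positivity))]
    exact aux_finite n (isBounded_closedBall)

lemma sphere_hausdorff_pos (n : ℕ) :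
    0 < μH[(n:ℝ)] (sphere (0 : EuclideanSpace ℝ (Fin (n+1))) 1) := by
  have hsub : ball (0 : EuclideanSpace ℝ (Fin n)) 1 ⊆
      projE '' sphere (0 : EuclideanSpace ℝ (Fin (n+1))) 1 := by
    intro y hy
    rw [mem_ball_zero_iff] at hy
    set cs : ℝ := Real.sqrt (1 - ‖y‖^2) with hcs
    have hc0 : 0 ≤ 1 - ‖y‖^2 := by nlinarith [norm_nonneg y]
    set x := insE (Fin.last n) cs y with hxdef
    have hsum : ∑ j, ‖x j‖^2 = 1 := by
      rw [Fin.sum_univ_succAbove (fun j => ‖x j‖^2) (Fin.last n)]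
      have h1 : ‖x (Fin.last n)‖^2 = 1 - ‖y‖^2 := by
        rw [hxdef, insE_apply_same, Real.norm_eq_abs, sq_abs, Real.sq_sqrt hc0]
      have h2 : ∀ k : Fin n, ‖x ((Fin.last n).succAbove k)‖^2 = ‖y k‖^2 := by
        intro k; rw [hxdef, insE_apply_succAbove]
      simp only [h2, h1]
      have h3 : ∑ k : Fin n, ‖y k‖^2 = ‖y‖^2 := by
        rw [EuclideanSpace.norm_eq, Real.sq_sqrt (by positivity)]
      rw [h3]; ring
    have hxs : x ∈ sphere (0 : EuclideanSpace ℝ (Fin (n+1))) 1 := by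
      rw [mem_sphere_zero_iff_norm, EuclideanSpace.norm_eq, hsum, Real.sqrt_one]
    refine ⟨x, hxs, ?_⟩
    apply (EuclideanSpace.equiv (Fin n) ℝ).injective
    rw [projE, ContinuousLinearEquiv.apply_symm_apply]
    funext j
    show x (Fin.castSucc j) = y j
    rw [← Fin.succAbove_last, hxdef, insE_apply_succAbove]
  have h1 := projE_lipschitz.hausdorffMeasure_image_le
    (show (0:ℝ) ≤ (n:ℝ) by positivity) (sphere (0 : EuclideanSpace ℝ (Fin (n+1))) 1)
  have h2 : 0 < μH[(n:ℝ)] (ball (0 : EuclideanSpace ℝ (Fin n)) 1) :=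
    aux_pos n isOpen_ball ⟨0, mem_ball_self one_pos⟩
  have h3 := (measure_mono hsub).trans h1
  simp only [ENNReal.coe_one, ENNReal.one_rpow, one_mul] at h3
  exact h2.trans_le h3



noncomputable instance sphereFin (n : ℕ) :
    IsFiniteMeasure ((μH[(n:ℝ)] : Measure (EuclideanSpace ℝ (Fin (n+1)))).restrict
      (sphere (0 : EuclideanSpace ℝ (Fin (n+1))) 1)) := by
  constructor
  rw [Measure.restrict_apply_univ]
  exact sphere_hausdorff_lt_top n

lemma integrableOn_sphere {n : ℕ} {G : Type*} [NormedAddCommGroup G]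
    {g : EuclideanSpace ℝ (Fin (n+1)) → G}
    (hg : ContinuousOn g (sphere (0 : EuclideanSpace ℝ (Fin (n+1))) 1)) :
    IntegrableOn g (sphere (0 : EuclideanSpace ℝ (Fin (n+1))) 1) μH[(n:ℝ)] := by
  obtain ⟨C, hC⟩ := (isCompact_sphere (0 : EuclideanSpace ℝ (Fin (n+1))) 1).exists_bound_of_continuousOn hg
  refine Integrable.mono' (integrable_const C) (hg.aestronglyMeasurable (isClosed_sphere.measurableSet)) ?_
  rw [ae_restrict_iff' isClosed_sphere.measurableSet]
  exact ae_of_all _ hC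

lemma key_hasFDerivAt {n : ℕ} (f : EuclideanSpace ℝ (Fin (n+1)) → ℝ)
    (f' : EuclideanSpace ℝ (Fin (n+1)) → (EuclideanSpace ℝ (Fin (n+1)) →L[ℝ] ℝ))
    {Ω : Set (EuclideanSpace ℝ (Fin (n+1)))} (hΩ : IsOpen Ω)
    (hf : ∀ w ∈ Ω, HasFDerivAt f (f' w) w) (hf'c : ContinuousOn f' Ω)
    (r ρ : ℝ) (hρ : 0 < ρ) (x₀ : EuclideanSpace ℝ (Fin (n+1)))
    (hsub : ∀ x ∈ closedBall x₀ ρ, ∀ y ∈ sphere (0 : EuclideanSpace ℝ (Fin (n+1))) 1,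
      x + r • y ∈ Ω) :
    ∀ x ∈ ball x₀ ρ,
      HasFDerivAt (fun z => ∫ y in sphere (0 : EuclideanSpace ℝ (Fin (n+1))) 1,
          f (z + r • y) ∂μH[(n:ℝ)])
        (∫ y in sphere (0 : EuclideanSpace ℝ (Fin (n+1))) 1, f' (x + r • y) ∂μH[(n:ℝ)]) x := by
  intro x hx
  have hScompact : IsCompact (sphere (0 : EuclideanSpace ℝ (Fin (n+1))) 1) := isCompact_sphere 0 1
  -- the compact set of relevant points
  set S : Set (EuclideanSpace ℝ (Fin (n+1))) := sphere 0 1 with hSdef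
  set K : Set (EuclideanSpace ℝ (Fin (n+1))) :=
    (fun p : EuclideanSpace ℝ (Fin (n+1)) × EuclideanSpace ℝ (Fin (n+1)) => p.1 + r • p.2) ''
      (closedBall x₀ ρ ×ˢ S) with hKdef
  have hKcompact : IsCompact K :=
    ((isCompact_closedBall x₀ ρ).prod hScompact).image (by fun_prop)
  have hKΩ : K ⊆ Ω := by
    rintro _ ⟨⟨a, b⟩, ⟨ha, hb⟩, rfl⟩
    exact hsub a ha b hb
  have hmemK : ∀ z ∈ closedBall x₀ ρ, ∀ y ∈ S, z + r • y ∈ K := by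
    intro z hz y hy
    exact ⟨(z, y), ⟨hz, hy⟩, rfl⟩
  obtain ⟨C, hC⟩ := hKcompact.exists_bound_of_continuousOn (hf'c.mono hKΩ)
  have hcf : ContinuousOn f Ω := fun w hw => (hf w hw).continuousAt.continuousWithinAt
  set ε : ℝ := ρ - dist x x₀ with hε
  have hεpos : 0 < ε := by
    rw [hε]
    have := mem_ball.mp hx
    linarith
  have hballsub : ball x ε ⊆ closedBall x₀ ρ := by
    intro z hz
    rw [mem_ball] at hz
    rw [mem_closedBall]
    have := dist_triangle z x x₀
    rw [hε] at hz
    linarith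
  -- continuity of translates
  have htrans : ∀ z ∈ closedBall x₀ ρ, ContinuousOn (fun y : EuclideanSpace ℝ (Fin (n+1)) => f (z + r • y)) S := by
    intro z hz
    exact hcf.comp (by fun_prop) (fun y hy => hKΩ (hmemK z hz y hy))
  have htrans' : ∀ z ∈ closedBall x₀ ρ, ContinuousOn (fun y : EuclideanSpace ℝ (Fin (n+1)) => f' (z + r • y)) S := by
    intro z hz
    exact hf'c.comp (by fun_prop) (fun y hy => hKΩ (hmemK z hz y hy))
  apply hasFDerivAt_integral_of_dominated_of_fderiv_le (𝕜 := ℝ)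
    (F := fun z (y : EuclideanSpace ℝ (Fin (n+1))) => f (z + r • y)) (F' := fun z (y : EuclideanSpace ℝ (Fin (n+1))) => f' (z + r • y))
    (bound := fun _ => C) (ball_mem_nhds x hεpos)
  · filter_upwards [isOpen_ball.mem_nhds hx] with z hz
    exact ((htrans z (ball_subset_closedBall hz)).aestronglyMeasurable isClosed_sphere.measurableSet)
  · exact integrableOn_sphere (htrans x (ball_subset_closedBall hx))
  · exact ((htrans' x (ball_subset_closedBall hx)).aestronglyMeasurable isClosed_sphere.measurableSet)
  · rw [ae_restrict_iff' isClosed_sphere.measurableSet]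
    refine ae_of_all _ (fun y hy z hz => ?_)
    exact hC _ (hmemK z (hballsub hz) y hy)
  · exact integrable_const C
  · rw [ae_restrict_iff' isClosed_sphere.measurableSet]
    refine ae_of_all _ (fun y hy z hz => ?_)
    have h1 : HasFDerivAt (fun z : EuclideanSpace ℝ (Fin (n+1)) => z + r • y) (ContinuousLinearMap.id ℝ (EuclideanSpace ℝ (Fin (n+1)))) z :=
      (hasFDerivAt_id z).add_const (r • y)
    have h2 := (hf _ (hsub z (hballsub hz) y hy)).comp z h1
    rwa [ContinuousLinearMap.comp_id] at h2

end AuxLemmas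

/-- Main theorem: if all spherical means `M(·, r, u)`, `r ∈ (0, r*)`, of a function
`u ∈ C⁰(closure D) ∩ C²(D)` are harmonic in `D_r`, then `u` is harmonic in `D`. -/
theorem stmt_2 (m : ℕ) (hm : 2 ≤ m) (D : Set (EuclideanSpace ℝ (Fin m)))
    (hD_open : IsOpen D) (hD_conn : IsConnected D)
    (hD_bdd : Bornology.IsBounded D)
    (u : EuclideanSpace ℝ (Fin m) → ℝ)
    (hu_cont : ContinuousOn u (closure D))
    (hu_C2 : ContDiffOn ℝ 2 u D)
    (rstar : ℝ) (hrstar : 0 < rstar)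
    (hDrstar : {x ∈ D | closedBall x rstar ⊆ D}.Nonempty)
    (hmeans : ∀ r ∈ Set.Ioo 0 rstar,
      ContDiffOn ℝ 2 (fun x => sphereMean m u x r) {x ∈ D | closedBall x r ⊆ D} ∧
        ∀ x ∈ {x ∈ D | closedBall x r ⊆ D},
          laplacian m (fun x => sphereMean m u x r) x = 0) :
    ∀ x ∈ D, laplacian m u x = 0 := by
  obtain ⟨n, rfl⟩ : ∃ n, m = n + 1 := ⟨m - 1, by omega⟩
  intro x₀ hx₀
  haveI : IsFiniteMeasure ((μH[(n:ℝ)] : Measure (EuclideanSpace ℝ (Fin (n+1)))).restrict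
      (sphere (0 : EuclideanSpace ℝ (Fin (n+1))) 1)) := by
    constructor
    rw [Measure.restrict_apply_univ]
    exact sphere_hausdorff_lt_top n
  have hμeq : (μH[((n+1:ℕ):ℝ)-1] : Measure (EuclideanSpace ℝ (Fin (n+1)))) = μH[(n:ℝ)] := by
    rw [show ((n+1:ℕ):ℝ)-1 = (n:ℝ) by push_cast; ring]
  set c : ℝ := (μH[(n:ℝ)] (sphere (0 : EuclideanSpace ℝ (Fin (n+1))) 1)).toReal with hc
  have hcpos : 0 < c :=
    ENNReal.toReal_pos (sphere_hausdorff_pos n).ne' (sphere_hausdorff_lt_top n).ne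
  -- derivatives of u
  have hudiff : ∀ w ∈ D, HasFDerivAt u (fderiv ℝ u w) w := fun w hw =>
    (((hu_C2.of_le (m := 1) (by norm_num)).differentiableOn one_ne_zero).differentiableAt
      (hD_open.mem_nhds hw)).hasFDerivAt
  have hf1c : ContinuousOn (fderiv ℝ u) D :=
    hu_C2.continuousOn_fderiv_of_isOpen hD_open (by norm_num)
  have hf1C1 : ContDiffOn ℝ 1 (fderiv ℝ u) D :=
    hu_C2.fderiv_of_isOpen hD_open (by norm_num)
  -- second derivative data
  set A : Fin (n+1) → (EuclideanSpace ℝ (Fin (n+1)) →L[ℝ] ℝ) →L[ℝ] ℝ :=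
    fun i => ContinuousLinearMap.apply ℝ ℝ (EuclideanSpace.single i (1:ℝ)) with hA
  set g' : Fin (n+1) → EuclideanSpace ℝ (Fin (n+1)) → (EuclideanSpace ℝ (Fin (n+1)) →L[ℝ] ℝ) :=
    fun i w => (A i).comp (fderiv ℝ (fderiv ℝ u) w) with hg'
  have hgdiff : ∀ i, ∀ w ∈ D,
      HasFDerivAt (fun y => fderiv ℝ u y (EuclideanSpace.single i (1:ℝ))) (g' i w) w := by
    intro i w hw
    have h1 : HasFDerivAt (fderiv ℝ u) (fderiv ℝ (fderiv ℝ u) w) w :=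
      ((hf1C1.differentiableOn one_ne_zero).differentiableAt (hD_open.mem_nhds hw)).hasFDerivAt
    exact ((A i).hasFDerivAt).comp w h1
  have hg'c : ∀ i, ContinuousOn (g' i) D := by
    intro i
    have h2 : ContinuousOn (fun w => fderiv ℝ (fderiv ℝ u) w) D :=
      hf1C1.continuousOn_fderiv_of_isOpen hD_open (by norm_num)
    exact ((ContinuousLinearMap.compL ℝ (EuclideanSpace ℝ (Fin (n+1)))
      (EuclideanSpace ℝ (Fin (n+1)) →L[ℝ] ℝ) ℝ (A i)).continuous).comp_continuousOn h2
  have hlapeq : ∀ w ∈ D, laplacian (n+1) u w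
      = ∑ i, (g' i w) (EuclideanSpace.single i (1:ℝ)) := by
    intro w hw
    rw [laplacian]
    exact Finset.sum_congr rfl fun i _ => by rw [(hgdiff i w hw).fderiv]
  have hlapc : ContinuousOn (laplacian (n+1) u) D := by
    have hcont : ContinuousOn (fun w => ∑ i, (g' i w) (EuclideanSpace.single i (1:ℝ))) D := by
      apply continuousOn_finset_sum
      intro i _
      exact (hg'c i).clm_apply continuousOn_const
    exact hcont.congr hlapeq
  -- radius
  obtain ⟨ρε, hρε, hballε⟩ := Metric.isOpen_iff.mp hD_open x₀ hx₀
  set ρ : ℝ := ρε / 4 with hρdef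
  have hρ : 0 < ρ := by positivity
  have hcb2 : closedBall x₀ (2*ρ) ⊆ D := by
    intro z hz
    apply hballε
    rw [mem_closedBall] at hz
    rw [mem_ball]
    rw [hρdef] at hz
    linarith
  -- main identity
  have hmain : ∀ r : ℝ, 0 < r → r < rstar → r ≤ ρ →
      ∫ y in sphere (0 : EuclideanSpace ℝ (Fin (n+1))) 1,
        laplacian (n+1) u (x₀ + r • y) ∂μH[(n:ℝ)] = 0 := by
    intro r hr0 hrstar' hrρ
    have hsub : ∀ x ∈ closedBall x₀ ρ, ∀ y ∈ sphere (0 : EuclideanSpace ℝ (Fin (n+1))) 1,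
        x + r • y ∈ D := by
      intro x hxm y hy
      apply hcb2
      rw [mem_closedBall] at hxm ⊢
      have hyn : ‖y‖ = 1 := mem_sphere_zero_iff_norm.mp hy
      have h1 : dist (x + r • y) x = ‖r • y‖ := by
        rw [dist_eq_norm, add_sub_cancel_left]
      have h2 : ‖r • y‖ = r := by
        rw [norm_smul, hyn, Real.norm_eq_abs, abs_of_pos hr0, mul_one]
      calc dist (x + r • y) x₀ ≤ dist (x + r • y) x + dist x x₀ := dist_triangle _ _ _
        _ = r + dist x x₀ := by rw [h1, h2]
        _ ≤ 2 * ρ := by linarith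
    have hDer1 := key_hasFDerivAt u (fderiv ℝ u) hD_open hudiff hf1c r ρ hρ x₀ hsub
    have hSrep : (fun x => sphereMean (n+1) u x r)
        = fun z => c⁻¹ • ∫ y in sphere (0 : EuclideanSpace ℝ (Fin (n+1))) 1,
            u (z + r • y) ∂μH[(n:ℝ)] := by
      funext z
      rw [sphereMean, hμeq, setAverage_eq]
      rfl
    have hDerS : ∀ x ∈ ball x₀ ρ, HasFDerivAt (fun z => sphereMean (n+1) u z r)
        (c⁻¹ • ∫ y in sphere (0 : EuclideanSpace ℝ (Fin (n+1))) 1,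
          fderiv ℝ u (x + r • y) ∂μH[(n:ℝ)]) x := by
      intro x hxm
      rw [hSrep]
      exact (hDer1 x hxm).const_smul c⁻¹
    have hint1 : ∀ x ∈ closedBall x₀ ρ,
        IntegrableOn (fun y => fderiv ℝ u (x + r • y))
          (sphere (0 : EuclideanSpace ℝ (Fin (n+1))) 1) μH[(n:ℝ)] := by
      intro x hxm
      apply integrableOn_sphere
      exact hf1c.comp (by fun_prop) (fun y hy => hsub x hxm y hy)
    have hint2 : ∀ i,
        IntegrableOn (fun y => g' i (x₀ + r • y))
          (sphere (0 : EuclideanSpace ℝ (Fin (n+1))) 1) μH[(n:ℝ)] := by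
      intro i
      apply integrableOn_sphere
      exact (hg'c i).comp (by fun_prop)
        (fun y hy => hsub x₀ (mem_closedBall_self hρ.le) y hy)
    have hint3 : ∀ i,
        IntegrableOn (fun y => (g' i (x₀ + r • y)) (EuclideanSpace.single i (1:ℝ)))
          (sphere (0 : EuclideanSpace ℝ (Fin (n+1))) 1) μH[(n:ℝ)] := by
      intro i
      apply integrableOn_sphere
      exact ((hg'c i).comp (by fun_prop)
        (fun y hy => hsub x₀ (mem_closedBall_self hρ.le) y hy)).clm_apply continuousOn_const
    have hsecond : ∀ i : Fin (n+1),
        fderiv ℝ (fun z => fderiv ℝ (fun x => sphereMean (n+1) u x r) z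
            (EuclideanSpace.single i (1:ℝ))) x₀ (EuclideanSpace.single i (1:ℝ))
        = c⁻¹ • ∫ y in sphere (0 : EuclideanSpace ℝ (Fin (n+1))) 1,
            (g' i (x₀ + r • y)) (EuclideanSpace.single i (1:ℝ)) ∂μH[(n:ℝ)] := by
      intro i
      have hψ : ∀ x ∈ ball x₀ ρ,
          fderiv ℝ (fun x => sphereMean (n+1) u x r) x (EuclideanSpace.single i (1:ℝ))
          = c⁻¹ • ∫ y in sphere (0 : EuclideanSpace ℝ (Fin (n+1))) 1,
              fderiv ℝ u (x + r • y) (EuclideanSpace.single i (1:ℝ)) ∂μH[(n:ℝ)] := by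
        intro x hxm
        rw [(hDerS x hxm).fderiv, ContinuousLinearMap.smul_apply,
          ContinuousLinearMap.integral_apply (hint1 x (ball_subset_closedBall hxm))]
      have hev : (fun z => fderiv ℝ (fun x => sphereMean (n+1) u x r) z
            (EuclideanSpace.single i (1:ℝ)))
          =ᶠ[nhds x₀] (fun z => c⁻¹ • ∫ y in sphere (0 : EuclideanSpace ℝ (Fin (n+1))) 1,
              fderiv ℝ u (z + r • y) (EuclideanSpace.single i (1:ℝ)) ∂μH[(n:ℝ)]) := by
        filter_upwards [isOpen_ball.mem_nhds (mem_ball_self hρ)] with z hz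
        exact hψ z hz
      rw [hev.fderiv_eq]
      have hkey2 := (key_hasFDerivAt (fun w => fderiv ℝ u w (EuclideanSpace.single i (1:ℝ)))
        (g' i) hD_open (hgdiff i) (hg'c i) r ρ hρ x₀ hsub x₀ (mem_ball_self hρ)).const_smul c⁻¹
      erw [hkey2.fderiv, ContinuousLinearMap.smul_apply,
        ContinuousLinearMap.integral_apply (hint2 i)]
    -- use the harmonicity hypothesis
    have hx₀mem : x₀ ∈ {x ∈ D | closedBall x r ⊆ D} := by
      refine ⟨hx₀, ?_⟩
      intro z hz
      apply hcb2
      rw [mem_closedBall] at hz ⊢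
      linarith
    have hlapS := (hmeans r ⟨hr0, hrstar'⟩).2 x₀ hx₀mem
    rw [laplacian] at hlapS
    have hsum : ∑ i : Fin (n+1), c⁻¹ • ∫ y in sphere (0 : EuclideanSpace ℝ (Fin (n+1))) 1,
        (g' i (x₀ + r • y)) (EuclideanSpace.single i (1:ℝ)) ∂μH[(n:ℝ)] = 0 := by
      rw [← hlapS]
      exact (Finset.sum_congr rfl fun i _ => hsecond i).symm
    rw [← Finset.smul_sum, ← integral_finset_sum _ (fun i _ => hint3 i)] at hsum
    have heqfun : ∫ y in sphere (0 : EuclideanSpace ℝ (Fin (n+1))) 1,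
        (∑ i : Fin (n+1), (g' i (x₀ + r • y)) (EuclideanSpace.single i (1:ℝ))) ∂μH[(n:ℝ)]
        = ∫ y in sphere (0 : EuclideanSpace ℝ (Fin (n+1))) 1,
            laplacian (n+1) u (x₀ + r • y) ∂μH[(n:ℝ)] := by
      apply setIntegral_congr_fun isClosed_sphere.measurableSet
      intro y hy
      exact (hlapeq _ (hsub x₀ (mem_closedBall_self hρ.le) y hy)).symm
    rw [heqfun] at hsum
    rcases smul_eq_zero.mp hsum with h | h
    · exact absurd h (by positivity)
    · exact h
  -- final epsilon argument
  have hfinal : ∀ ε : ℝ, 0 < ε → |laplacian (n+1) u x₀| ≤ ε := by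
    intro ε hε
    have hca : ContinuousAt (laplacian (n+1) u) x₀ :=
      hlapc.continuousAt (hD_open.mem_nhds hx₀)
    obtain ⟨δ, hδ, hδc⟩ := Metric.continuousAt_iff.mp hca ε hε
    set r : ℝ := min (δ/2) (min ρ (rstar/2)) with hrdef
    have hr0 : 0 < r := by
      apply lt_min (by linarith)
      exact lt_min hρ (by linarith)
    have hrρ : r ≤ ρ := le_trans (min_le_right _ _) (min_le_left _ _)
    have hrrs : r < rstar := lt_of_le_of_lt (le_trans (min_le_right _ _) (min_le_right _ _))
      (by linarith)
    have hrδ : r < δ := lt_of_le_of_lt (min_le_left _ _) (by linarith)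
    have hzero := hmain r hr0 hrrs hrρ
    have hmemD : ∀ y ∈ sphere (0 : EuclideanSpace ℝ (Fin (n+1))) 1, x₀ + r • y ∈ D := by
      intro y hy
      apply hcb2
      have hyn : ‖y‖ = 1 := mem_sphere_zero_iff_norm.mp hy
      rw [mem_closedBall, dist_eq_norm, add_sub_cancel_left, norm_smul, hyn,
        Real.norm_eq_abs, abs_of_pos hr0, mul_one]
      linarith
    have hclose : ∀ y ∈ sphere (0 : EuclideanSpace ℝ (Fin (n+1))) 1,
        |laplacian (n+1) u (x₀ + r • y) - laplacian (n+1) u x₀| ≤ ε := by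
      intro y hy
      have hyn : ‖y‖ = 1 := mem_sphere_zero_iff_norm.mp hy
      have hd : dist (x₀ + r • y) x₀ < δ := by
        rw [dist_eq_norm, add_sub_cancel_left, norm_smul, hyn, Real.norm_eq_abs,
          abs_of_pos hr0, mul_one]
        exact hrδ
      have := hδc hd
      rw [Real.dist_eq] at this
      exact this.le
    have hintf : IntegrableOn (fun y => laplacian (n+1) u (x₀ + r • y))
        (sphere (0 : EuclideanSpace ℝ (Fin (n+1))) 1) μH[(n:ℝ)] := by
      apply integrableOn_sphere
      exact hlapc.comp (by fun_prop) hmemD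
    have hconst : ∫ _y in sphere (0 : EuclideanSpace ℝ (Fin (n+1))) 1,
        laplacian (n+1) u x₀ ∂μH[(n:ℝ)] = c • laplacian (n+1) u x₀ := by
      rw [setIntegral_const]
      rfl
    have hdiff : ∫ y in sphere (0 : EuclideanSpace ℝ (Fin (n+1))) 1,
        (laplacian (n+1) u (x₀ + r • y) - laplacian (n+1) u x₀) ∂μH[(n:ℝ)]
        = - (c • laplacian (n+1) u x₀) := by
      rw [integral_sub hintf (integrable_const _),
        hzero, hconst, zero_sub]
    have hbound : ‖∫ y in sphere (0 : EuclideanSpace ℝ (Fin (n+1))) 1,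
        (laplacian (n+1) u (x₀ + r • y) - laplacian (n+1) u x₀) ∂μH[(n:ℝ)]‖ ≤ ε * c := by
      apply norm_setIntegral_le_of_norm_le_const (sphere_hausdorff_lt_top n)
      · intro y hy
        rw [Real.norm_eq_abs]
        exact hclose y hy
    rw [hdiff, norm_neg, norm_smul, Real.norm_eq_abs, Real.norm_eq_abs,
      abs_of_pos hcpos] at hbound
    nlinarith [hbound, hcpos, abs_nonneg (laplacian (n+1) u x₀)]
  by_contra hne
  have habs : 0 < |laplacian (n+1) u x₀| := abs_pos.mpr hne
  have := hfinal (|laplacian (n+1) u x₀| / 2) (by positivity)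
  linarith
end

section
/- Let D be a domain in ℝ³ and let u ∈ C²(D) satisfy ∇²u − μ²u = 0 in D for some μ ≠ 0. If for r > 0 the set D_r = {x ∈ D : the closure of B_r(x) is contained in D} is nonempty, then the spherical mean M(·, r, u) satisfies ∇²M(·, r, u) − μ²M(·, r, u) = 0 in D_r, with the same coefficient μ² as for u. -/
open MeasureTheory Metric

section Aux

local notation "E3" => EuclideanSpace ℝ (Fin 3)

private lemma aesm_sphere {β : Type*} [TopologicalSpace β] [TopologicalSpace.PseudoMetrizableSpace β]
    [SecondCountableTopologyEither E3 β]
    (g : EuclideanSpace ℝ (Fin 3) → β) (hg : ContinuousOn g (sphere (0 : E3) 1))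
    (ν : Measure E3) (hν : ∀ᵐ y ∂ν, y ∈ sphere (0 : E3) 1) :
    AEStronglyMeasurable g ν := by
  rw [← Measure.restrict_eq_self_of_ae_mem hν]
  exact hg.aestronglyMeasurable isClosed_sphere.measurableSet

private lemma mem_cb_of_sphere {r : ℝ} (hr : 0 ≤ r) (x : E3) {y : E3}
    (hy : y ∈ sphere (0 : E3) 1) : x + r • y ∈ closedBall x r := by
  have hy1 : ‖y‖ = 1 := mem_sphere_zero_iff_norm.1 hy
  rw [mem_closedBall, dist_eq_norm]
  simp [norm_smul, hy1, abs_of_nonneg hr]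

private lemma integrable_comp {β : Type*} [NormedAddCommGroup β]
    (D : Set E3) (g : EuclideanSpace ℝ (Fin 3) → β) (hg : ContinuousOn g D)
    (ν : Measure E3) [IsFiniteMeasure ν] (hν : ∀ᵐ y ∂ν, y ∈ sphere (0 : E3) 1)
    {r : ℝ} (hr : 0 ≤ r) (x : E3) (hx : closedBall x r ⊆ D) :
    Integrable (fun y => g (x + r • y)) ν := by
  have hmap : ∀ y ∈ sphere (0 : E3) 1, x + r • y ∈ D := fun y hy =>
    hx (mem_cb_of_sphere hr x hy)
  have hcont : ContinuousOn (fun y : E3 => g (x + r • y)) (sphere (0 : E3) 1) :=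
    hg.comp (by fun_prop : Continuous fun y : E3 => x + r • y).continuousOn hmap
  obtain ⟨C, hC⟩ := (isCompact_sphere (0 : E3) 1).exists_bound_of_continuousOn hcont
  refine (integrable_const C).mono' (aesm_sphere _ hcont ν hν) ?_
  filter_upwards [hν] with y hy using hC y hy

private lemma key_deriv (D : Set E3) (hD : IsOpen D)
    (f : EuclideanSpace ℝ (Fin 3) → ℝ) (f' : EuclideanSpace ℝ (Fin 3) → (E3 →L[ℝ] ℝ))
    (hf : ∀ z ∈ D, HasFDerivAt f (f' z) z)
    (hfc : ContinuousOn f D) (hf'c : ContinuousOn f' D)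
    (ν : Measure E3) [IsFiniteMeasure ν] (hν : ∀ᵐ y ∂ν, y ∈ sphere (0 : E3) 1)
    {r : ℝ} (hr : 0 < r)
    (x₀ : E3) (hx₀ : closedBall x₀ r ⊆ D) :
    HasFDerivAt (fun x => ∫ y, f (x + r • y) ∂ν) (∫ y, f' (x₀ + r • y) ∂ν) x₀ := by
  obtain ⟨ε, hε, hsub⟩ := (isCompact_closedBall x₀ r).exists_cthickening_subset_open hD hx₀
  rw [cthickening_closedBall hε.le hr.le] at hsub
  have hmem : ∀ x ∈ ball x₀ ε, ∀ y ∈ sphere (0 : E3) 1,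
      x + r • y ∈ closedBall x₀ (ε + r) := by
    intro x hx y hy
    have h1 : x + r • y ∈ closedBall x r := mem_cb_of_sphere hr.le x hy
    rw [mem_closedBall] at h1 ⊢
    have h2 : dist x x₀ < ε := mem_ball.1 hx
    calc dist (x + r • y) x₀ ≤ dist (x + r • y) x + dist x x₀ := dist_triangle _ _ _
      _ ≤ ε + r := by linarith
  obtain ⟨C, hC⟩ := (isCompact_closedBall x₀ (ε + r)).exists_bound_of_continuousOn
    (hf'c.mono hsub)
  apply hasFDerivAt_integral_of_dominated_of_fderiv_le
    (F := fun x y => f (x + r • y)) (F' := fun x y => f' (x + r • y))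
    (bound := fun _ => C) (s := ball x₀ ε) (ball_mem_nhds x₀ hε)
  · filter_upwards [ball_mem_nhds x₀ hε] with x hx
    refine aesm_sphere _ ?_ ν hν
    exact hfc.comp (by fun_prop : Continuous fun y : E3 => x + r • y).continuousOn
      (fun y hy => hsub (hmem x hx y hy))
  · exact integrable_comp D f hfc ν hν hr.le x₀ hx₀
  · refine aesm_sphere _ ?_ ν hν
    exact hf'c.comp (by fun_prop : Continuous fun y : E3 => x₀ + r • y).continuousOn
      (fun y hy => hx₀ (mem_cb_of_sphere hr.le x₀ hy))
  · filter_upwards [hν] with y hy x hx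
    exact hC _ (hmem x hx y hy)
  · exact integrable_const C
  · filter_upwards [hν] with y hy x hx
    have hz : x + r • y ∈ D := hsub (hmem x hx y hy)
    have h1 : HasFDerivAt (fun x : E3 => x + r • y) (ContinuousLinearMap.id ℝ E3) x :=
      (hasFDerivAt_id x).add_const (r • y)
    simpa [Function.comp_def] using (hf _ hz).comp x h1

end Aux

/-- If `u` is panharmonic in a domain `D ⊆ ℝ³` and `D_r` is nonempty, then the
spherical mean `M(·, r, u)` is panharmonic in `D_r` with the same coefficient. -/
theorem stmt_12 (D : Set (EuclideanSpace ℝ (Fin 3)))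
    (hD_open : IsOpen D) (hD_conn : IsConnected D)
    (u : EuclideanSpace ℝ (Fin 3) → ℝ)
    (hu_C2 : ContDiffOn ℝ 2 u D)
    (μ : ℝ) (hμ : μ ≠ 0)
    (hu_pan : ∀ x ∈ D, laplacian 3 u x - μ ^ 2 * u x = 0)
    (r : ℝ) (hr : 0 < r)
    (hDr : {x ∈ D | closedBall x r ⊆ D}.Nonempty) :
    ∀ x ∈ {x ∈ D | closedBall x r ⊆ D},
      laplacian 3 (fun x => sphereMean 3 u x r) x - μ ^ 2 * sphereMean 3 u x r = 0 := by
  classical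
  intro x₀ hx₀'
  obtain ⟨hx₀D, hx₀r⟩ := hx₀'
  set S : Set (EuclideanSpace ℝ (Fin 3)) := sphere (0 : (EuclideanSpace ℝ (Fin 3))) 1 with hS
  set ν₀ : Measure (EuclideanSpace ℝ (Fin 3)) := μH[((3 : ℕ) : ℝ) - 1].restrict S with hν₀
  set ν : Measure (EuclideanSpace ℝ (Fin 3)) := (ν₀ Set.univ)⁻¹ • ν₀ with hνdef
  have hfin : IsFiniteMeasure ν := by
    constructor
    rw [hνdef]
    rw [Measure.smul_apply, smul_eq_mul]
    rcases eq_or_ne (ν₀ Set.univ) 0 with h | h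
    · simp [h]
    rcases eq_or_ne (ν₀ Set.univ) ⊤ with h' | h'
    · simp [h']
    · rw [ENNReal.inv_mul_cancel h h']; exact ENNReal.one_lt_top
  haveI := hfin
  have hSmeas : MeasurableSet S := isClosed_sphere.measurableSet
  have hν_ae : ∀ᵐ y ∂ν, y ∈ S := by
    rw [ae_iff]
    have h1 : {y : (EuclideanSpace ℝ (Fin 3)) | ¬ y ∈ S} = Sᶜ := rfl
    rw [h1, hνdef, Measure.smul_apply, hν₀, Measure.restrict_apply hSmeas.compl]
    simp
  have hμsm : ∀ x, sphereMean 3 u x r = ∫ y, u (x + r • y) ∂ν := fun x => rfl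
  -- derivative data for u
  have hu1 : ∀ z ∈ D, HasFDerivAt u (fderiv ℝ u z) z := fun z hz =>
    ((hu_C2.contDiffAt (hD_open.mem_nhds hz)).differentiableAt (by norm_num)).hasFDerivAt
  have hucont : ContinuousOn u D := hu_C2.continuousOn
  have hf'cont : ContinuousOn (fderiv ℝ u) D :=
    hu_C2.continuousOn_fderiv_of_isOpen hD_open (by norm_num)
  have hfd1 : ContDiffOn ℝ 1 (fderiv ℝ u) D :=
    hu_C2.fderiv_of_isOpen hD_open (by norm_num)
  set e : Fin 3 → (EuclideanSpace ℝ (Fin 3)) := fun i => EuclideanSpace.single i 1 with he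
  set v : Fin 3 → (EuclideanSpace ℝ (Fin 3)) → ℝ := fun i z => fderiv ℝ u z (e i) with hv
  have hv1 : ∀ i, ContDiffOn ℝ 1 (v i) D := fun i =>
    (ContinuousLinearMap.apply ℝ ℝ (e i)).contDiff.comp_contDiffOn hfd1
  have hvD : ∀ i, ∀ z ∈ D, HasFDerivAt (v i) (fderiv ℝ (v i) z) z := fun i z hz =>
    (((hv1 i).contDiffAt (hD_open.mem_nhds hz)).differentiableAt one_ne_zero).hasFDerivAt
  have hvc : ∀ i, ContinuousOn (v i) D := fun i => (hv1 i).continuousOn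
  have hv'c : ∀ i, ContinuousOn (fderiv ℝ (v i)) D := fun i =>
    (hv1 i).continuousOn_fderiv_of_isOpen hD_open le_rfl
  -- neighborhood of x₀ inside D_r
  obtain ⟨ε, hε, hsub⟩ := (isCompact_closedBall x₀ r).exists_cthickening_subset_open hD_open hx₀r
  rw [cthickening_closedBall hε.le hr.le] at hsub
  have hball : ∀ x ∈ ball x₀ ε, closedBall x r ⊆ D := by
    intro x hx z hz
    apply hsub
    rw [mem_closedBall] at hz ⊢
    have h2 : dist x x₀ < ε := mem_ball.1 hx
    calc dist z x₀ ≤ dist z x + dist x x₀ := dist_triangle _ _ _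
      _ ≤ ε + r := by linarith
  set G : (EuclideanSpace ℝ (Fin 3)) → ℝ := fun x => ∫ y, u (x + r • y) ∂ν with hG
  have hGd : ∀ x ∈ ball x₀ ε, HasFDerivAt G (∫ y, fderiv ℝ u (x + r • y) ∂ν) x :=
    fun x hx => key_deriv D hD_open u (fderiv ℝ u) hu1 hucont hf'cont ν hν_ae hr x (hball x hx)
  have hstep : ∀ i : Fin 3,
      fderiv ℝ (fun x => fderiv ℝ G x (e i)) x₀ (e i)
        = ∫ y, fderiv ℝ (v i) (x₀ + r • y) (e i) ∂ν := by
    intro i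
    have heq : (fun x => fderiv ℝ G x (e i)) =ᶠ[nhds x₀]
        (fun x => ∫ y, v i (x + r • y) ∂ν) := by
      filter_upwards [ball_mem_nhds x₀ hε] with x hx
      rw [(hGd x hx).fderiv]
      exact ContinuousLinearMap.integral_apply
        (integrable_comp D (fderiv ℝ u) hf'cont ν hν_ae hr.le x (hball x hx)) (e i)
    rw [heq.fderiv_eq]
    have h2 : HasFDerivAt (fun x => ∫ y, v i (x + r • y) ∂ν)
        (∫ y, fderiv ℝ (v i) (x₀ + r • y) ∂ν) x₀ :=
      key_deriv D hD_open (v i) (fderiv ℝ (v i)) (hvD i) (hvc i) (hv'c i) ν hν_ae hr x₀ hx₀r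
    rw [h2.fderiv]
    exact ContinuousLinearMap.integral_apply
      (integrable_comp D (fderiv ℝ (v i)) (hv'c i) ν hν_ae hr.le x₀ hx₀r) (e i)
  have hlapG : laplacian 3 G x₀ = μ ^ 2 * G x₀ := by
    have h1 : laplacian 3 G x₀ = ∑ i, ∫ y, fderiv ℝ (v i) (x₀ + r • y) (e i) ∂ν :=
      Finset.sum_congr rfl fun i _ => hstep i
    rw [h1, ← integral_finset_sum]
    · have h2 : ∀ᵐ y ∂ν, (∑ i, fderiv ℝ (v i) (x₀ + r • y) (e i))
          = μ ^ 2 * u (x₀ + r • y) := by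
        filter_upwards [hν_ae] with y hy
        have hz : x₀ + r • y ∈ D := hx₀r (mem_cb_of_sphere hr.le x₀ hy)
        have hpan := hu_pan _ hz
        have hlap : laplacian 3 u (x₀ + r • y) = ∑ i, fderiv ℝ (v i) (x₀ + r • y) (e i) := rfl
        rw [← hlap]
        linarith
      rw [integral_congr_ae h2, integral_const_mul]
    · intro i _
      exact integrable_comp D (fun z => fderiv ℝ (v i) z (e i))
        (((ContinuousLinearMap.apply ℝ ℝ (e i)).continuous).comp_continuousOn (hv'c i))
        ν hν_ae hr.le x₀ hx₀r
  show laplacian 3 G x₀ - μ ^ 2 * G x₀ = 0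
  rw [hlapG]; ring
end

section
/- Let D be a bounded domain in ℝ³ such that for every continuous function f on ∂D there exists a function continuous on the closure of D, harmonic in D, and equal to f on ∂D (a Dirichlet domain), and let u : closure(D) → ℝ be continuous on the closure of D and C² in D. Fix μ > 0 and suppose there is r* > 0 with D_{r*} ≠ ∅ such that for every r ∈ (0, r*) the spherical mean M(·, r, u) satisfies ∇²M(·, r, u) − μ²M(·, r, u) = 0 in D_r. Then u satisfies ∇²u − μ²u = 0 in D. -/
open MeasureTheory Metric

open scoped NNReal ENNReal Topology
set_option maxHeartbeats 1000000

local notation "E3" => EuclideanSpace ℝ (Fin 3)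
local notation "S2" => sphere (0 : EuclideanSpace ℝ (Fin 3)) 1
local notation "νS" => Measure.restrict (μH[(2:ℝ)] : Measure (EuclideanSpace ℝ (Fin 3))) S2


lemma sin_lip (a b : ℝ) : |Real.sin a - Real.sin b| ≤ |a - b| := by
  rw [Real.sin_sub_sin]
  have h1 := Real.abs_sin_le_abs (x := (a - b) / 2)
  have h2 := Real.abs_cos_le_one ((a + b) / 2)
  rw [abs_mul, abs_mul, abs_two]
  have h3 : |(a-b)/2| = |a-b|/2 := by rw [abs_div]; norm_num
  rw [h3] at h1
  nlinarith [abs_nonneg (Real.sin ((a-b)/2)), abs_nonneg (a-b), abs_nonneg (Real.cos ((a+b)/2))]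

lemma cos_lip (a b : ℝ) : |Real.cos a - Real.cos b| ≤ |a - b| := by
  rw [Real.cos_sub_cos]
  have h1 := Real.abs_sin_le_abs (x := (a - b) / 2)
  have h2 := Real.abs_sin_le_one ((a + b) / 2)
  rw [abs_mul, abs_mul, show |(-2:ℝ)| = 2 by norm_num]
  have h3 : |(a-b)/2| = |a-b|/2 := by rw [abs_div]; norm_num
  rw [h3] at h1
  nlinarith [abs_nonneg (Real.sin ((a-b)/2)), abs_nonneg (a-b), abs_nonneg (Real.sin ((a+b)/2))]

lemma norm_le_sum_abs (v : E3) : ‖v‖ ≤ |v 0| + |v 1| + |v 2| := by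
  rw [EuclideanSpace.norm_eq]
  have h : ∑ i : Fin 3, ‖v i‖ ^ 2 = ‖v 0‖^2 + ‖v 1‖^2 + ‖v 2‖^2 := by
    simp [Fin.sum_univ_three]
  rw [h]
  have : Real.sqrt ((|v 0| + |v 1| + |v 2|)^2) = |v 0| + |v 1| + |v 2| := by
    apply Real.sqrt_sq; positivity
  rw [← this]
  apply Real.sqrt_le_sqrt
  simp only [Real.norm_eq_abs]
  nlinarith [abs_nonneg (v 0), abs_nonneg (v 1), abs_nonneg (v 2)]

lemma abs_coord_le_norm (v : E3) (i : Fin 3) : |v i| ≤ ‖v‖ := by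
  rw [EuclideanSpace.norm_eq]
  rw [← Real.sqrt_sq (abs_nonneg (v i))]
  apply Real.sqrt_le_sqrt
  have : |v i| ^ 2 = ‖v i‖ ^ 2 := by simp [Real.norm_eq_abs]
  rw [this]
  exact Finset.single_le_sum (f := fun j => ‖v j‖^2) (fun j _ => by positivity) (Finset.mem_univ i)




noncomputable def sphCoord (p : Fin 2 → ℝ) : E3 :=
  (WithLp.equiv 2 (Fin 3 → ℝ)).symm
    ![Real.sin (p 0) * Real.cos (p 1), Real.sin (p 0) * Real.sin (p 1), Real.cos (p 0)]

lemma sphCoord_apply (p : Fin 2 → ℝ) :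
    sphCoord p 0 = Real.sin (p 0) * Real.cos (p 1) ∧
    sphCoord p 1 = Real.sin (p 0) * Real.sin (p 1) ∧
    sphCoord p 2 = Real.cos (p 0) := by
  refine ⟨rfl, rfl, rfl⟩

lemma sphCoord_lipschitz : LipschitzWith 5 sphCoord := by
  apply LipschitzWith.of_dist_le_mul
  intro p q
  rw [dist_eq_norm]
  refine (norm_le_sum_abs _).trans ?_
  have hpq0 : |p 0 - q 0| ≤ dist p q := by
    have := dist_le_pi_dist p q 0; rwa [Real.dist_eq] at this
  have hpq1 : |p 1 - q 1| ≤ dist p q := by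
    have := dist_le_pi_dist p q 1; rwa [Real.dist_eq] at this
  have key : ∀ a b c d : ℝ, |Real.sin a * Real.cos b - Real.sin c * Real.cos d|
      ≤ |a - c| + |b - d| := by
    intro a b c d
    have : Real.sin a * Real.cos b - Real.sin c * Real.cos d
        = (Real.sin a - Real.sin c) * Real.cos b + Real.sin c * (Real.cos b - Real.cos d) := by
      ring
    rw [this]
    refine (abs_add_le _ _).trans ?_
    rw [abs_mul, abs_mul]
    have h1 := sin_lip a c
    have h2 := cos_lip b d
    have h3 := Real.abs_cos_le_one b
    have h4 := Real.abs_sin_le_one c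
    nlinarith [abs_nonneg (Real.sin a - Real.sin c), abs_nonneg (Real.cos b - Real.cos d),
      abs_nonneg (Real.sin c), abs_nonneg (Real.cos b)]
  have key2 : ∀ a b c d : ℝ, |Real.sin a * Real.sin b - Real.sin c * Real.sin d|
      ≤ |a - c| + |b - d| := by
    intro a b c d
    have : Real.sin a * Real.sin b - Real.sin c * Real.sin d
        = (Real.sin a - Real.sin c) * Real.sin b + Real.sin c * (Real.sin b - Real.sin d) := by
      ring
    rw [this]
    refine (abs_add_le _ _).trans ?_
    rw [abs_mul, abs_mul]
    have h1 := sin_lip a c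
    have h2 := sin_lip b d
    have h3 := Real.abs_sin_le_one b
    have h4 := Real.abs_sin_le_one c
    nlinarith [abs_nonneg (Real.sin a - Real.sin c), abs_nonneg (Real.sin b - Real.sin d),
      abs_nonneg (Real.sin c), abs_nonneg (Real.sin b)]
  have e0 : (sphCoord p - sphCoord q) 0 = sphCoord p 0 - sphCoord q 0 := rfl
  have e1 : (sphCoord p - sphCoord q) 1 = sphCoord p 1 - sphCoord q 1 := rfl
  have e2 : (sphCoord p - sphCoord q) 2 = sphCoord p 2 - sphCoord q 2 := rfl
  rw [e0, e1, e2]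
  obtain ⟨a0, a1, a2⟩ := sphCoord_apply p
  obtain ⟨b0, b1, b2⟩ := sphCoord_apply q
  rw [a0, a1, a2, b0, b1, b2]
  have c0 := key (p 0) (p 1) (q 0) (q 1)
  have c1 := key2 (p 0) (p 1) (q 0) (q 1)
  have c2 := cos_lip (p 0) (q 0)
  have : ((5 : ℝ≥0) : ℝ) = 5 := rfl
  rw [this]
  have hd : (0:ℝ) ≤ dist p q := dist_nonneg
  linarith

lemma sphere_subset_image :
    sphere (0:E3) 1 ⊆ sphCoord '' (closedBall (0 : Fin 2 → ℝ) 4) := by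
  intro v hv
  have hnorm : ‖v‖ = 1 := by rwa [mem_sphere_zero_iff_norm] at hv
  have hsum : v 0 ^ 2 + v 1 ^ 2 + v 2 ^ 2 = 1 := by
    have := EuclideanSpace.norm_eq v
    rw [hnorm] at this
    have h2 : Real.sqrt (∑ i : Fin 3, ‖v i‖ ^ 2) = 1 := this.symm
    have h3 : (∑ i : Fin 3, ‖v i‖ ^ 2) = 1 := by
      have hnn : (0:ℝ) ≤ ∑ i : Fin 3, ‖v i‖ ^ 2 := by positivity
      nlinarith [Real.sq_sqrt hnn]
    simpa [Fin.sum_univ_three, Real.norm_eq_abs, sq_abs] using h3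
  set c := v 2 with hc
  have hc2 : c^2 ≤ 1 := by nlinarith [sq_nonneg (v 0), sq_nonneg (v 1)]
  have hc1 : -1 ≤ c := by nlinarith
  have hc1' : c ≤ 1 := by nlinarith
  set θ := Real.arccos c with hθ
  have hsinθ : Real.sin θ = Real.sqrt (1 - c^2) := Real.sin_arccos c
  have hcosθ : Real.cos θ = c := Real.cos_arccos hc1 hc1'
  have hρ : Real.sqrt (1 - c^2) = Real.sqrt (v 0 ^2 + v 1 ^2) := by
    congr 1; nlinarith
  have hθmem : |θ| ≤ 4 := by
    rw [abs_of_nonneg (Real.arccos_nonneg c)]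
    exact (Real.arccos_le_pi c).trans (by linarith [Real.pi_le_four])
  by_cases hρ0 : Real.sqrt (v 0 ^2 + v 1 ^2) = 0
  · have h00 : v 0 = 0 ∧ v 1 = 0 := by
      have hz : v 0 ^2 + v 1 ^2 ≤ 0 := Real.sqrt_eq_zero'.mp hρ0
      constructor <;> nlinarith [sq_nonneg (v 0), sq_nonneg (v 1)]
    refine ⟨![θ, 0], ?_, ?_⟩
    · rw [mem_closedBall_zero_iff]
      rw [pi_norm_le_iff_of_nonneg (by norm_num)]
      intro i
      fin_cases i <;> simp [Real.norm_eq_abs]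
      · exact hθmem
    · have hs0 : Real.sin θ = 0 := by
        rw [hsinθ, hρ, hρ0]
      apply PiLp.ext
      intro i
      fin_cases i
      · show Real.sin (![θ, 0] 0) * Real.cos (![θ, 0] 1) = v 0
        simp [hs0, h00.1]
      · show Real.sin (![θ, 0] 0) * Real.sin (![θ, 0] 1) = v 1
        simp [hs0, h00.2]
      · show Real.cos (![θ, 0] 0) = v 2
        simpa using hcosθ
  · set z : ℂ := ⟨v 0, v 1⟩ with hz
    have habs : ‖z‖ = Real.sqrt (v 0 ^2 + v 1 ^2) := by
      rw [Complex.norm_def, Complex.normSq_mk]; ring_nf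
    have hz0 : z ≠ 0 := by
      intro h
      rw [h] at habs
      simp at habs
      exact hρ0 habs.symm
    set φ := Complex.arg z with hφ
    have hcosφ : Real.cos φ = v 0 / Real.sqrt (v 0 ^2 + v 1 ^2) := by
      rw [hφ, Complex.cos_arg hz0, habs]
    have hsinφ : Real.sin φ = v 1 / Real.sqrt (v 0 ^2 + v 1 ^2) := by
      rw [hφ, Complex.sin_arg, habs]
    have hφmem : |φ| ≤ 4 := (Complex.abs_arg_le_pi z).trans (by linarith [Real.pi_le_four])
    refine ⟨![θ, φ], ?_, ?_⟩
    · rw [mem_closedBall_zero_iff]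
      rw [pi_norm_le_iff_of_nonneg (by norm_num)]
      intro i
      fin_cases i <;> simp only [Real.norm_eq_abs, Matrix.cons_val_zero, Matrix.cons_val_one,
        Matrix.head_cons]
      · exact hθmem
      · exact hφmem
    · have hsθ : Real.sin θ = Real.sqrt (v 0 ^2 + v 1 ^2) := by rw [hsinθ, hρ]
      apply PiLp.ext
      intro i
      fin_cases i
      · show Real.sin (![θ, φ] 0) * Real.cos (![θ, φ] 1) = v 0
        simp only [Matrix.cons_val_zero, Matrix.cons_val_one, Matrix.head_cons]
        rw [hsθ, hcosφ]
        field_simp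
      · show Real.sin (![θ, φ] 0) * Real.sin (![θ, φ] 1) = v 1
        simp only [Matrix.cons_val_zero, Matrix.cons_val_one, Matrix.head_cons]
        rw [hsθ, hsinφ]
        field_simp
      · show Real.cos (![θ, φ] 0) = v 2
        simpa using hcosθ

lemma sphere_hausdorff_ne_top : μH[(2:ℝ)] (sphere (0:E3) 1) ≠ ⊤ := by
  have h1 : μH[(2:ℝ)] (sphere (0:E3) 1)
      ≤ μH[(2:ℝ)] (sphCoord '' (closedBall (0 : Fin 2 → ℝ) 4)) :=
    measure_mono sphere_subset_image
  have h2 := sphCoord_lipschitz.hausdorffMeasure_image_le (by norm_num : (0:ℝ) ≤ 2)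
    (closedBall (0 : Fin 2 → ℝ) 4)
  have h3 : μH[(2:ℝ)] (closedBall (0 : Fin 2 → ℝ) 4) < ⊤ := by
    have hcard : ((2:ℝ)) = ((Fintype.card (Fin 2) : ℝ)) := by simp
    rw [hcard, hausdorffMeasure_pi_real]
    exact (isCompact_closedBall _ _).measure_lt_top
  have h4 : ((5:ℝ≥0) : ℝ≥0∞) ^ (2:ℝ) * μH[(2:ℝ)] (closedBall (0 : Fin 2 → ℝ) 4) < ⊤ := by
    apply ENNReal.mul_lt_top _ h3
    exact ENNReal.rpow_lt_top_of_nonneg (by norm_num) (by simp)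
  exact ((h1.trans h2).trans_lt h4).ne

noncomputable def projE3 (v : E3) : Fin 2 → ℝ := ![v 0, v 1]

lemma projE3_lipschitz : LipschitzWith 1 projE3 := by
  apply LipschitzWith.of_dist_le_mul
  intro v w
  rw [NNReal.coe_one, one_mul, dist_pi_le_iff dist_nonneg]
  intro i
  fin_cases i <;>
    · simp only [projE3, Matrix.cons_val_zero, Matrix.cons_val_one, Matrix.head_cons, Real.dist_eq]
      rw [dist_eq_norm]
      first
        | exact (by simpa using abs_coord_le_norm (v - w) 0)
        | exact (by simpa using abs_coord_le_norm (v - w) 1)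

lemma ball_subset_proj_image :
    closedBall (0 : Fin 2 → ℝ) (1/2) ⊆ projE3 '' (sphere (0:E3) 1) := by
  intro p hp
  rw [mem_closedBall_zero_iff] at hp
  have hp0 : |p 0| ≤ 1/2 := by
    have := norm_le_pi_norm p 0; rw [Real.norm_eq_abs] at this; linarith
  have hp1 : |p 1| ≤ 1/2 := by
    have := norm_le_pi_norm p 1; rw [Real.norm_eq_abs] at this; linarith
  obtain ⟨ha1, ha2⟩ := abs_le.mp hp0
  obtain ⟨hb1, hb2⟩ := abs_le.mp hp1
  have hsq : p 0 ^ 2 + p 1 ^ 2 ≤ 1 := by nlinarith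
  set c := Real.sqrt (1 - (p 0 ^ 2 + p 1 ^ 2)) with hc
  have hc2 : c ^ 2 = 1 - (p 0 ^ 2 + p 1 ^ 2) := Real.sq_sqrt (by linarith)
  refine ⟨(WithLp.equiv 2 (Fin 3 → ℝ)).symm ![p 0, p 1, c], ?_, ?_⟩
  · rw [mem_sphere_zero_iff_norm, EuclideanSpace.norm_eq]
    have : ∀ i : Fin 3, ‖((WithLp.equiv 2 (Fin 3 → ℝ)).symm ![p 0, p 1, c]) i‖ ^ 2
        = (![p 0, p 1, c] i)^2 := by
      intro i; rw [Real.norm_eq_abs, sq_abs]; rfl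
    rw [Fin.sum_univ_three, this 0, this 1, this 2]
    have e : (![p 0, p 1, c] (0:Fin 3))^2 + (![p 0, p 1, c] (1:Fin 3))^2
        + (![p 0, p 1, c] (2:Fin 3))^2 = p 0 ^ 2 + p 1 ^ 2 + c ^ 2 := by simp
    rw [e, hc2]
    simp
  · funext i
    fin_cases i <;> rfl

lemma sphere_hausdorff_ne_zero : μH[(2:ℝ)] (sphere (0:E3) 1) ≠ 0 := by
  intro h0
  have h1 : μH[(2:ℝ)] (closedBall (0 : Fin 2 → ℝ) (1/2))
      ≤ μH[(2:ℝ)] (projE3 '' (sphere (0:E3) 1)) := measure_mono ball_subset_proj_image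
  have h2 := projE3_lipschitz.hausdorffMeasure_image_le (by norm_num : (0:ℝ) ≤ 2)
    (sphere (0:E3) 1)
  rw [h0, mul_zero] at h2
  have h3 : μH[(2:ℝ)] (closedBall (0 : Fin 2 → ℝ) (1/2)) = 0 := le_antisymm (h1.trans h2)
    (zero_le)
  have hcard : ((2:ℝ)) = ((Fintype.card (Fin 2) : ℝ)) := by simp
  rw [hcard, hausdorffMeasure_pi_real] at h3
  exact ((measure_closedBall_pos volume _ (by norm_num)).ne' h3)





lemma isFiniteνS : IsFiniteMeasure νS :=
  ⟨by rw [Measure.restrict_apply_univ]; exact sphere_hausdorff_ne_top.lt_top⟩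

attribute [local instance] isFiniteνS

lemma hSmeas : MeasurableSet S2 := (isClosed_sphere).measurableSet

lemma sphereMean_eq (u : E3 → ℝ) (x : E3) (r : ℝ) :
    sphereMean 3 u x r = (μH[(2:ℝ)] S2).toReal⁻¹ * ∫ y, u (x + r • y) ∂νS := by
  unfold sphereMean
  rw [show ((3:ℕ):ℝ) - 1 = (2:ℝ) by norm_num]
  rw [setAverage_eq, smul_eq_mul]
  rfl

lemma aesm_comp {G : Type*} [NormedAddCommGroup G] {g : E3 → G} {s : Set E3}
    (hg : ContinuousOn g s) {w : E3} {r : ℝ} (h : ∀ y ∈ S2, w + r • y ∈ s) :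
    AEStronglyMeasurable (fun y => g (w + r • y)) νS := by
  have hcont : ContinuousOn (fun y : E3 => g (w + r • y)) S2 :=
    hg.comp ((continuous_const.add (continuous_id.const_smul r)).continuousOn) h
  exact hcont.aestronglyMeasurable hSmeas

lemma integrable_comp_s14 {G : Type*} [NormedAddCommGroup G] {g : E3 → G} {s : Set E3}
    (hg : ContinuousOn g s) {w : E3} {r : ℝ} (h : ∀ y ∈ S2, w + r • y ∈ s)
    {C : ℝ} (hC : ∀ z ∈ s, ‖g z‖ ≤ C) :
    Integrable (fun y => g (w + r • y)) νS := by
  refine ⟨aesm_comp hg h, HasFiniteIntegral.of_bounded (C := C) ?_⟩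
  filter_upwards [ae_restrict_mem hSmeas] with y hy
  exact hC _ (h y hy)

lemma laplacian_eq_sum {D : Set E3} (hD : IsOpen D) {u : E3 → ℝ} (hu : ContDiffOn ℝ 2 u D)
    {z : E3} (hz : z ∈ D) :
    laplacian 3 u z = ∑ i : Fin 3,
      fderiv ℝ (fderiv ℝ u) z (EuclideanSpace.single i 1) (EuclideanSpace.single i 1) := by
  unfold laplacian
  apply Finset.sum_congr rfl
  intro i _
  set e : E3 := EuclideanSpace.single i 1
  have hf' : ContDiffOn ℝ 1 (fderiv ℝ u) D := hu.fderiv_of_isOpen hD (by norm_num)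
  have hdiff : DifferentiableAt ℝ (fderiv ℝ u) z :=
    (hf'.differentiableOn one_ne_zero).differentiableAt (hD.mem_nhds hz)
  have h1 : HasFDerivAt (fun y => fderiv ℝ u y e)
      ((ContinuousLinearMap.apply ℝ ℝ e).comp (fderiv ℝ (fderiv ℝ u) z)) z :=
    (ContinuousLinearMap.apply ℝ ℝ e).hasFDerivAt.comp z hdiff.hasFDerivAt
  rw [h1.fderiv]
  rfl

lemma laplacian_continuousOn {D : Set E3} (hD : IsOpen D) {u : E3 → ℝ}
    (hu : ContDiffOn ℝ 2 u D) : ContinuousOn (laplacian 3 u) D := by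
  have hf' : ContDiffOn ℝ 1 (fderiv ℝ u) D := hu.fderiv_of_isOpen hD (by norm_num)
  have hf'' : ContinuousOn (fderiv ℝ (fderiv ℝ u)) D :=
    hf'.continuousOn_fderiv_of_isOpen hD (le_refl 1)
  have hcont : ContinuousOn (fun z => ∑ i : Fin 3,
      fderiv ℝ (fderiv ℝ u) z (EuclideanSpace.single i 1) (EuclideanSpace.single i 1)) D := by
    apply continuousOn_finset_sum
    intro i _
    exact (hf''.clm_apply continuousOn_const).clm_apply continuousOn_const
  exact hcont.congr (fun z hz => laplacian_eq_sum hD hu hz)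


lemma stepA_lemma {D : Set E3} (u : E3 → ℝ) (f' : E3 → E3 →L[ℝ] ℝ)
    (hcontu : ContinuousOn u D) (hcontf' : ContinuousOn f' D)
    (hder1 : ∀ z ∈ D, HasFDerivAt u (f' z) z)
    {K : Set E3} (hK : K ⊆ D) {r : ℝ} {C0 C1 : ℝ}
    (hC0 : ∀ z ∈ K, ‖u z‖ ≤ C0) (hC1 : ∀ z ∈ K, ‖f' z‖ ≤ C1)
    {x : E3} {ε : ℝ}
    (hmem : ∀ w ∈ ball x ε, ∀ y ∈ S2, w + r • y ∈ K) :
    ∀ w ∈ ball x ε,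
      HasFDerivAt (fun w' => ∫ y, u (w' + r • y) ∂νS) (∫ y, f' (w + r • y) ∂νS) w := by
  intro w hw
  set ε' := ε - dist w x with hε'def
  have hε'pos : 0 < ε' := by
    have := mem_ball.mp hw; rw [hε'def]; linarith
  have hsub : ball w ε' ⊆ ball x ε := by
    intro z hz
    rw [mem_ball] at hz ⊢
    have := dist_triangle z w x
    rw [hε'def] at hz
    linarith
  apply hasFDerivAt_integral_of_dominated_of_fderiv_le (𝕜 := ℝ)
    (F' := fun w' y => f' (w' + r • y)) (bound := fun _ => C1) (ball_mem_nhds w hε'pos)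
  · filter_upwards [isOpen_ball.mem_nhds hw] with x' hx'
    exact aesm_comp (hcontu.mono hK) (hmem x' hx')
  · exact integrable_comp_s14 (hcontu.mono hK) (hmem w hw) hC0
  · exact aesm_comp (hcontf'.mono hK) (hmem w hw)
  · filter_upwards [ae_restrict_mem hSmeas] with y hy x' hx'
    exact hC1 _ (hmem x' (hsub hx') y hy)
  · exact integrable_const C1
  · filter_upwards [ae_restrict_mem hSmeas] with y hy x' hx'
    have hz : x' + r • y ∈ D := hK (hmem x' (hsub hx') y hy)
    have h2 : HasFDerivAt (fun w' : E3 => w' + r • y) (ContinuousLinearMap.id ℝ E3) x' :=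
      (hasFDerivAt_id x').add_const _
    have h3 := (hder1 _ hz).comp x' h2
    simpa [Function.comp_def] using h3

lemma norm_apply_comp_le (e : E3) (B : E3 →L[ℝ] E3 →L[ℝ] ℝ) {C : ℝ} (hB : ‖B‖ ≤ C) :
    ‖(ContinuousLinearMap.apply ℝ ℝ e).comp B‖ ≤ ‖e‖ * C := by
  refine (ContinuousLinearMap.opNorm_comp_le _ _).trans ?_
  have h1 : ‖ContinuousLinearMap.apply ℝ ℝ e‖ ≤ ‖e‖ := by
    apply ContinuousLinearMap.opNorm_le_bound _ (norm_nonneg e)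
    intro A
    rw [ContinuousLinearMap.apply_apply]
    exact (A.le_opNorm e).trans_eq (mul_comm _ _)
  have h2 := norm_nonneg B
  have h3 := norm_nonneg (ContinuousLinearMap.apply ℝ ℝ e)
  nlinarith

lemma contOn_apply_comp {s : Set E3} (e : E3) {f'' : E3 → E3 →L[ℝ] E3 →L[ℝ] ℝ}
    (h : ContinuousOn f'' s) :
    ContinuousOn (fun z => (ContinuousLinearMap.apply ℝ ℝ e).comp (f'' z)) s :=
  (((ContinuousLinearMap.compL ℝ (EuclideanSpace ℝ (Fin 3))
    (EuclideanSpace ℝ (Fin 3) →L[ℝ] ℝ) ℝ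
    (ContinuousLinearMap.apply ℝ ℝ e)).continuous).comp_continuousOn h)

lemma stepB_lemma {D : Set E3} (f' : E3 → E3 →L[ℝ] ℝ) (f'' : E3 → E3 →L[ℝ] E3 →L[ℝ] ℝ)
    (hcontf' : ContinuousOn f' D) (hcontf'' : ContinuousOn f'' D)
    (hder2 : ∀ z ∈ D, HasFDerivAt f' (f'' z) z)
    {K : Set E3} (hK : K ⊆ D) {r : ℝ} {C1 C2 : ℝ}
    (hC1 : ∀ z ∈ K, ‖f' z‖ ≤ C1) (hC2 : ∀ z ∈ K, ‖f'' z‖ ≤ C2)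
    {x : E3} {ε : ℝ} (hεpos : 0 < ε)
    (hmem : ∀ w ∈ ball x ε, ∀ y ∈ S2, w + r • y ∈ K) (e : E3) :
    HasFDerivAt (fun w => ∫ y, f' (w + r • y) e ∂νS)
      (∫ y, (ContinuousLinearMap.apply ℝ ℝ e).comp (f'' (x + r • y)) ∂νS) x := by
  have hconte : ContinuousOn (fun z => f' z e) D := hcontf'.clm_apply continuousOn_const
  apply hasFDerivAt_integral_of_dominated_of_fderiv_le (𝕜 := ℝ)
    (F' := fun w y => (ContinuousLinearMap.apply ℝ ℝ e).comp (f'' (w + r • y)))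
    (bound := fun _ => ‖e‖ * C2) (ball_mem_nhds x hεpos)
  · filter_upwards [isOpen_ball.mem_nhds (mem_ball_self hεpos)] with x' hx'
    exact aesm_comp (hconte.mono hK) (hmem x' hx')
  · refine integrable_comp_s14 (hconte.mono hK) (hmem x (mem_ball_self hεpos)) (C := C1 * ‖e‖) ?_
    intro z hz
    exact ((f' z).le_opNorm e).trans (by nlinarith [hC1 z hz, norm_nonneg e, norm_nonneg (f' z)])
  · exact aesm_comp ((contOn_apply_comp e hcontf'').mono hK) (hmem x (mem_ball_self hεpos))
  · filter_upwards [ae_restrict_mem hSmeas] with y hy x' hx'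
    exact norm_apply_comp_le e _ (hC2 _ (hmem x' hx' y hy))
  · exact integrable_const _
  · filter_upwards [ae_restrict_mem hSmeas] with y hy x' hx'
    have hz : x' + r • y ∈ D := hK (hmem x' hx' y hy)
    have h2 : HasFDerivAt (fun w' : E3 => w' + r • y) (ContinuousLinearMap.id ℝ E3) x' :=
      (hasFDerivAt_id x').add_const _
    have h3 := (hder2 _ hz).comp x' h2
    rw [ContinuousLinearMap.comp_id] at h3
    exact (ContinuousLinearMap.apply ℝ ℝ e).hasFDerivAt.comp x' h3

lemma smul_integral_apply (c : ℝ) {φ : E3 → E3 →L[ℝ] ℝ} (h : Integrable φ νS) (e : E3) :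
    (c • ∫ y, φ y ∂νS) e = c * ∫ y, φ y e ∂νS := by
  rw [ContinuousLinearMap.smul_apply, ContinuousLinearMap.integral_apply h e, smul_eq_mul]

lemma fderiv_fderiv_eval {x : E3} {ε : ℝ} (hε : 0 < ε) {G : E3 → ℝ}
    {L : E3 → E3 →L[ℝ] ℝ}
    (hG : ∀ w ∈ ball x ε, HasFDerivAt G (L w) w)
    {e : E3} {g : E3 → ℝ} (hg : ∀ w ∈ ball x ε, L w e = g w)
    {M : E3 →L[ℝ] ℝ} (hM : HasFDerivAt g M x) :
    fderiv ℝ (fun w => fderiv ℝ G w e) x e = M e := by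
  have heq : (fun w => fderiv ℝ G w e) =ᶠ[𝓝 x] g := by
    filter_upwards [isOpen_ball.mem_nhds (mem_ball_self hε)] with w hw
    rw [(hG w hw).fderiv]
    exact hg w hw
  rw [heq.fderiv_eq, hM.fderiv]

lemma lap_mean_assemble (u lap : E3 → ℝ) (f' : E3 → E3 →L[ℝ] ℝ)
    (f'' : E3 → E3 →L[ℝ] E3 →L[ℝ] ℝ) (x : E3) (r : ℝ) {ε : ℝ} (hε : 0 < ε)
    (hA : ∀ w ∈ ball x ε, HasFDerivAt (fun w' => ∫ y, u (w' + r • y) ∂νS)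
      (∫ y, f' (w + r • y) ∂νS) w)
    (hB : ∀ e : E3, HasFDerivAt (fun w => ∫ y, f' (w + r • y) e ∂νS)
      (∫ y, (ContinuousLinearMap.apply ℝ ℝ e).comp (f'' (x + r • y)) ∂νS) x)
    (hint1 : ∀ w ∈ ball x ε, Integrable (fun y => f' (w + r • y)) νS)
    (hint2 : ∀ e : E3, Integrable
      (fun y => (ContinuousLinearMap.apply ℝ ℝ e).comp (f'' (x + r • y))) νS)
    (hint3 : ∀ i : Fin 3, Integrable (fun y => f'' (x + r • y)
      (EuclideanSpace.single i 1) (EuclideanSpace.single i 1)) νS)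
    (hlap : ∀ᵐ y ∂νS, (∑ i : Fin 3, f'' (x + r • y)
      (EuclideanSpace.single i 1) (EuclideanSpace.single i 1)) = lap (x + r • y)) :
    laplacian 3 (fun w => sphereMean 3 u w r) x = sphereMean 3 lap x r := by
  set c : ℝ := (μH[(2:ℝ)] S2).toReal⁻¹ with hcdef
  have hGfun : (fun w => sphereMean 3 u w r) = fun w => c * ∫ y, u (w + r • y) ∂νS :=
    funext fun w => sphereMean_eq u w r
  rw [hGfun, sphereMean_eq]
  unfold laplacian
  have hterm : ∀ i : Fin 3,
      fderiv ℝ (fun w => fderiv ℝ (fun w' => c * ∫ y, u (w' + r • y) ∂νS) w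
          (EuclideanSpace.single i 1)) x (EuclideanSpace.single i 1)
        = c * ∫ y, f'' (x + r • y) (EuclideanSpace.single i 1)
            (EuclideanSpace.single i 1) ∂νS := by
    intro i
    have h1 := fderiv_fderiv_eval hε
      (G := fun w' => c * ∫ y, u (w' + r • y) ∂νS)
      (L := fun w => c • ∫ y, f' (w + r • y) ∂νS)
      (fun w hw => (hA w hw).const_mul c)
      (e := EuclideanSpace.single i 1)
      (g := fun w => c * ∫ y, f' (w + r • y) (EuclideanSpace.single i 1) ∂νS)
      (fun w hw => smul_integral_apply c (hint1 w hw) _)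
      (M := c • ∫ y, (ContinuousLinearMap.apply ℝ ℝ (EuclideanSpace.single i 1)).comp
        (f'' (x + r • y)) ∂νS)
      ((hB _).const_mul c)
    rw [h1, smul_integral_apply c (hint2 _) _]
    simp only [ContinuousLinearMap.coe_comp', Function.comp_apply,
      ContinuousLinearMap.apply_apply]
  rw [Finset.sum_congr rfl (fun i _ => hterm i), ← Finset.mul_sum]
  congr 1
  rw [← integral_finset_sum _ (fun i _ => hint3 i)]
  exact integral_congr_ae hlap

lemma lap_mean {D : Set E3} (hD : IsOpen D) {u : E3 → ℝ} (hu : ContDiffOn ℝ 2 u D)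
    {x : E3} {r : ℝ} (hr : 0 ≤ r) (hball : closedBall x r ⊆ D) :
    laplacian 3 (fun w => sphereMean 3 u w r) x = sphereMean 3 (laplacian 3 u) x r := by
  obtain ⟨δ, hδpos, hδ⟩ := (isCompact_closedBall x r).exists_cthickening_subset_open hD hball
  have hK : closedBall x (r + δ) ⊆ D := by
    rw [add_comm r δ, ← cthickening_closedBall hδpos.le hr]
    exact hδ
  set K := closedBall x (r + δ) with hKdef
  have hKcomp : IsCompact K := isCompact_closedBall _ _
  set ε := δ/2 with hεdef
  have hεpos : 0 < ε := by positivity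
  have hmem : ∀ w ∈ ball x ε, ∀ y ∈ S2, w + r • y ∈ K := by
    intro w hw y hy
    rw [hKdef, mem_closedBall]
    have h1 : dist (w + r • y) w = r := by
      rw [dist_eq_norm]
      simp only [add_sub_cancel_left, norm_smul, Real.norm_eq_abs, abs_of_nonneg hr,
        mem_sphere_zero_iff_norm.mp hy, mul_one]
    have h2 := mem_ball.mp hw
    have h3 := dist_triangle (w + r • y) w x
    rw [h1] at h3
    have h4 : ε ≤ δ := by rw [hεdef]; linarith
    linarith
  obtain ⟨f', hf'def⟩ : ∃ f', f' = fderiv ℝ u := ⟨_, rfl⟩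
  obtain ⟨f'', hf''def⟩ : ∃ f'', f'' = fderiv ℝ f' := ⟨_, rfl⟩
  have hC1cd : ContDiffOn ℝ 1 f' D := by
    rw [hf'def]; exact hu.fderiv_of_isOpen hD (by norm_num)
  have hcontf' : ContinuousOn f' D := hC1cd.continuousOn
  have hcontf'' : ContinuousOn f'' D := by
    rw [hf''def]; exact hC1cd.continuousOn_fderiv_of_isOpen hD (le_refl 1)
  have hcontu : ContinuousOn u D := hu.continuousOn
  have hder1 : ∀ z ∈ D, HasFDerivAt u (f' z) z := by
    rw [hf'def]
    exact fun z hz =>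
      ((hu.differentiableOn (by norm_num)).differentiableAt (hD.mem_nhds hz)).hasFDerivAt
  have hder2 : ∀ z ∈ D, HasFDerivAt f' (f'' z) z := by
    rw [hf''def]
    exact fun z hz =>
      ((hC1cd.differentiableOn one_ne_zero).differentiableAt (hD.mem_nhds hz)).hasFDerivAt
  obtain ⟨C0, hC0⟩ := hKcomp.exists_bound_of_continuousOn (hcontu.mono hK)
  obtain ⟨C1, hC1⟩ := hKcomp.exists_bound_of_continuousOn (hcontf'.mono hK)
  obtain ⟨C2, hC2⟩ := hKcomp.exists_bound_of_continuousOn (E := E3 →L[ℝ] E3 →L[ℝ] ℝ) (hcontf''.mono hK)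
  have hA := stepA_lemma u f' hcontu hcontf' hder1 hK hC0 hC1 hmem
  have hB := stepB_lemma f' f'' hcontf' hcontf'' hder2 hK hC1 hC2 hεpos hmem
  have hint1 : ∀ w ∈ ball x ε, Integrable (fun y => f' (w + r • y)) νS := fun w hw =>
    integrable_comp_s14 (hcontf'.mono hK) (hmem w hw) hC1
  have hint2 : ∀ e : E3, Integrable
      (fun y => (ContinuousLinearMap.apply ℝ ℝ e).comp (f'' (x + r • y))) νS := fun e =>
    integrable_comp_s14 ((contOn_apply_comp e hcontf'').mono hK)
      (hmem x (mem_ball_self hεpos)) (C := ‖e‖ * C2)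
      (fun z hz => norm_apply_comp_le e _ (hC2 z hz))
  have hint3 : ∀ i : Fin 3, Integrable (fun y => f'' (x + r • y)
      (EuclideanSpace.single i 1) (EuclideanSpace.single i 1)) νS := by
    intro i
    refine integrable_comp_s14
      (((hcontf''.mono hK).clm_apply continuousOn_const).clm_apply continuousOn_const)
      (hmem x (mem_ball_self hεpos))
      (C := C2 * ‖(EuclideanSpace.single i 1 : E3)‖ * ‖(EuclideanSpace.single i 1 : E3)‖) ?_
    intro z hz
    set e : E3 := EuclideanSpace.single i 1
    refine ((f'' z e).le_opNorm e).trans ?_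
    have h1 := (f'' z).le_opNorm e
    have h2 := hC2 z hz
    have h3 : ‖f'' z e‖ ≤ C2 * ‖e‖ := h1.trans (mul_le_mul_of_nonneg_right h2 (norm_nonneg e))
    exact mul_le_mul_of_nonneg_right h3 (norm_nonneg e)
  have hlap : ∀ᵐ y ∂νS, (∑ i : Fin 3, f'' (x + r • y)
      (EuclideanSpace.single i 1) (EuclideanSpace.single i 1)) = laplacian 3 u (x + r • y) := by
    filter_upwards [ae_restrict_mem hSmeas] with y hy
    rw [hf''def, hf'def]
    exact (laplacian_eq_sum hD hu (hK (hmem x (mem_ball_self hεpos) y hy))).symm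
  exact lap_mean_assemble u (laplacian 3 u) f' f'' x r hεpos hA hB hint1 hint2 hint3 hlap

lemma toReal_pos : 0 < (μH[(2:ℝ)] S2).toReal :=
  ENNReal.toReal_pos sphere_hausdorff_ne_zero sphere_hausdorff_ne_top

lemma mean_tendsto {s : Set E3} (hs : IsOpen s) {f : E3 → ℝ} (hf : ContinuousOn f s)
    {x : E3} (hx : x ∈ s) :
    Filter.Tendsto (fun r => sphereMean 3 f x r) (nhdsWithin 0 (Set.Ioi 0)) (nhds (f x)) := by
  rw [Metric.tendsto_nhdsWithin_nhds]
  intro ε hε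
  obtain ⟨δ₁, hδ₁pos, hδ₁⟩ := Metric.continuousAt_iff.mp (hf.continuousAt (hs.mem_nhds hx))
    (ε/2) (by linarith)
  obtain ⟨δ₂, hδ₂pos, hδ₂⟩ : ∃ δ₂ > 0, closedBall x δ₂ ⊆ s := by
    obtain ⟨t, ht, hts⟩ := Metric.mem_nhds_iff.mp (hs.mem_nhds hx)
    exact ⟨t/2, by linarith, (closedBall_subset_ball (by linarith)).trans hts⟩
  refine ⟨min δ₁ δ₂, by positivity, ?_⟩
  intro r hr hrd
  rw [Set.mem_Ioi] at hr
  rw [Real.dist_eq, sub_zero, abs_of_pos hr] at hrd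
  have hmem : ∀ y ∈ S2, x + r • y ∈ closedBall x δ₂ ∧ dist (x + r • y) x < δ₁ := by
    intro y hy
    have h1 : dist (x + r • y) x = r := by
      rw [dist_eq_norm]
      simp only [add_sub_cancel_left, norm_smul, Real.norm_eq_abs, abs_of_pos hr,
        mem_sphere_zero_iff_norm.mp hy, mul_one]
    constructor
    · rw [mem_closedBall, h1]
      exact le_of_lt (lt_of_lt_of_le hrd (min_le_right _ _))
    · rw [h1]
      exact lt_of_lt_of_le hrd (min_le_left _ _)
  have hint : Integrable (fun y => f (x + r • y)) νS := by
    obtain ⟨C, hC⟩ := (isCompact_closedBall x δ₂).exists_bound_of_continuousOn (hf.mono hδ₂)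
    exact integrable_comp_s14 (hf.mono hδ₂) (fun y hy => (hmem y hy).1) hC
  set c : ℝ := (μH[(2:ℝ)] S2).toReal⁻¹ with hcdef
  have hcpos : 0 < c := by
    rw [hcdef]; exact inv_pos.mpr toReal_pos
  have key : sphereMean 3 f x r - f x = c * ∫ y, (f (x + r • y) - f x) ∂νS := by
    rw [sphereMean_eq, integral_sub hint (integrable_const _), integral_const,
      Measure.real, Measure.restrict_apply_univ, smul_eq_mul, mul_sub]
    have : c * ((μH[(2:ℝ)] S2).toReal * f x) = f x := by
      rw [hcdef, ← mul_assoc, inv_mul_cancel₀ toReal_pos.ne', one_mul]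
    rw [this]
  have hbound : ‖∫ y, (f (x + r • y) - f x) ∂νS‖ ≤ (ε/2) * ((νS) Set.univ).toReal := by
    apply norm_integral_le_of_norm_le_const
    filter_upwards [ae_restrict_mem hSmeas] with y hy
    rw [Real.norm_eq_abs]
    exact le_of_lt (hδ₁ (hmem y hy).2)
  rw [Real.dist_eq, key, abs_mul, abs_of_pos hcpos]
  rw [Measure.restrict_apply_univ] at hbound
  have h2 : c * |∫ y, (f (x + r • y) - f x) ∂νS| ≤ c * ((ε/2) * (μH[(2:ℝ)] S2).toReal) := by
    apply mul_le_mul_of_nonneg_left _ hcpos.le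
    rwa [Real.norm_eq_abs] at hbound
  have h3 : c * ((ε/2) * (μH[(2:ℝ)] S2).toReal) = ε/2 := by
    rw [hcdef, mul_comm (ε/2), ← mul_assoc, inv_mul_cancel₀ toReal_pos.ne', one_mul]
  linarith


/-- Analogue of the main theorem for panharmonic functions: if in a Dirichlet
domain `D ⊆ ℝ³` all spherical means `M(·, r, u)`, `r ∈ (0, r*)`, satisfy
`∇²M − μ²M = 0` in `D_r`, then `u` satisfies `∇²u − μ²u = 0` in `D`. -/
theorem stmt_14 (D : Set (EuclideanSpace ℝ (Fin 3)))
    (hD_open : IsOpen D) (hD_conn : IsConnected D)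
    (hD_bdd : Bornology.IsBounded D)
    (hDirichlet : ∀ f : EuclideanSpace ℝ (Fin 3) → ℝ, ContinuousOn f (frontier D) →
      ∃ w : EuclideanSpace ℝ (Fin 3) → ℝ, ContinuousOn w (closure D) ∧
        ContDiffOn ℝ 2 w D ∧ (∀ x ∈ D, laplacian 3 w x = 0) ∧
        Set.EqOn w f (frontier D))
    (u : EuclideanSpace ℝ (Fin 3) → ℝ)
    (hu_cont : ContinuousOn u (closure D))
    (hu_C2 : ContDiffOn ℝ 2 u D)
    (μ : ℝ) (hμ : 0 < μ)
    (rstar : ℝ) (hrstar : 0 < rstar)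
    (hDrstar : {x ∈ D | closedBall x rstar ⊆ D}.Nonempty)
    (hmeans : ∀ r ∈ Set.Ioo 0 rstar, ∀ x ∈ {x ∈ D | closedBall x r ⊆ D},
      laplacian 3 (fun x => sphereMean 3 u x r) x - μ ^ 2 * sphereMean 3 u x r = 0) :
    ∀ x ∈ D, laplacian 3 u x - μ ^ 2 * u x = 0 := by
  intro x hx
  obtain ⟨r₁, hr₁pos, hr₁⟩ : ∃ r₁ > 0, closedBall x r₁ ⊆ D := by
    obtain ⟨t, ht, hts⟩ := Metric.mem_nhds_iff.mp (hD_open.mem_nhds hx)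
    exact ⟨t/2, by linarith, (closedBall_subset_ball (by linarith)).trans hts⟩
  set m := min r₁ rstar with hmdef
  have hmpos : 0 < m := lt_min hr₁pos hrstar
  have heq : ∀ r ∈ Set.Ioo 0 m,
      sphereMean 3 (laplacian 3 u) x r - μ ^ 2 * sphereMean 3 u x r = 0 := by
    intro r hr
    have hrr : closedBall x r ⊆ D :=
      (closedBall_subset_closedBall (le_of_lt (lt_of_lt_of_le hr.2 (min_le_left _ _)))).trans hr₁
    have h1 := hmeans r ⟨hr.1, lt_of_lt_of_le hr.2 (min_le_right _ _)⟩ x ⟨hx, hrr⟩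
    rwa [lap_mean hD_open hu_C2 hr.1.le hrr] at h1
  have T1 : Filter.Tendsto (fun r => sphereMean 3 (laplacian 3 u) x r - μ ^ 2 * sphereMean 3 u x r)
      (nhdsWithin 0 (Set.Ioi 0)) (nhds (laplacian 3 u x - μ ^ 2 * u x)) := by
    exact (mean_tendsto hD_open (laplacian_continuousOn hD_open hu_C2) hx).sub
      ((mean_tendsto hD_open hu_C2.continuousOn hx).const_mul (μ ^ 2))
  have T2 : Filter.Tendsto (fun r => sphereMean 3 (laplacian 3 u) x r - μ ^ 2 * sphereMean 3 u x r)
      (nhdsWithin 0 (Set.Ioi 0)) (nhds 0) := by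
    apply Filter.Tendsto.congr' _ tendsto_const_nhds
    filter_upwards [Ioo_mem_nhdsGT hmpos] with r hr
    exact (heq r hr).symm
  exact tendsto_nhds_unique T1 T2
end
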